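/- arXiv:1910.14482 — 4 statements merged into one kernel-verified Lean document; each statement's English description precedes it below -/
import Mathlib

section
/- Let μ and ν be Borel probability measures on ℝ₊ = [0,∞) with bounded support, let u ≥ 0, and set a := ξ'(u) + μ⁻¹(1). Then ∫₀¹ ξ*( ν⁻¹(x) − μ⁻¹(x) ) dx ≥ ∫₀¹ ξ*( min(ν⁻¹(x), a) − μ⁻¹(x) ) dx + u ∫₀¹ ( ν⁻¹(x) − min(ν⁻¹(x), a) ) dx. -/
open MeasureTheory

/-- `ξ(r) = Σ_{p ≥ 2} β_p² r^p`, reindexed so that `β (p+2)` is the coefficient of `r^(p+2)`. -/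
noncomputable def xi (β : ℕ → ℝ) (r : ℝ) : ℝ := ∑' p : ℕ, (β (p + 2)) ^ 2 * r ^ (p + 2)

/-- The derivative series `ξ'(r) = Σ_{p ≥ 2} p β_p² r^(p-1)`. -/
noncomputable def xi' (β : ℕ → ℝ) (r : ℝ) : ℝ :=
  ∑' p : ℕ, ((p + 2 : ℕ) : ℝ) * (β (p + 2)) ^ 2 * r ^ (p + 1)

/-- `ξ*(s) = sup_{r ≥ 0} (r s - ξ(r))`. -/
noncomputable def xiStar (β : ℕ → ℝ) (s : ℝ) : ℝ :=
  sSup {y : ℝ | ∃ r : ℝ, 0 ≤ r ∧ y = r * s - xi β r}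

/-- The quantile function `μ⁻¹(r) = inf {s ≥ 0 : μ([0,s]) ≥ r}`. -/
noncomputable def quantile (μ : Measure ℝ) (r : ℝ) : ℝ :=
  sInf {s : ℝ | 0 ≤ s ∧ r ≤ (μ (Set.Icc 0 s)).toReal}

/-! ### Auxiliary lemmas on `xi`, `xi'` and `xiStar` -/

lemma pow_sub_pow_le' {r r' u : ℝ} (h0 : 0 ≤ r) (h1 : r ≤ r') (h2 : r' ≤ u) (n : ℕ) :
    r' ^ (n + 1) - r ^ (n + 1) ≤ (r' - r) * (n + 1) * u ^ n := by
  induction n with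
  | zero => simp
  | succ n ih =>
    have hr' : 0 ≤ r' := h0.trans h1
    have hu : 0 ≤ u := hr'.trans h2
    have h3 : r ^ (n + 1) ≤ u ^ (n + 1) := pow_le_pow_left₀ h0 (h1.trans h2) _
    have h6 : r' * (r' ^ (n + 1) - r ^ (n + 1)) ≤ u * ((r' - r) * (↑n + 1) * u ^ n) :=
      mul_le_mul h2 ih (sub_nonneg.mpr (pow_le_pow_left₀ h0 h1 _)) hu
    have h7 : (r' - r) * r ^ (n + 1) ≤ (r' - r) * u ^ (n + 1) :=
      mul_le_mul_of_nonneg_left h3 (sub_nonneg.mpr h1)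
    have key : r' ^ (n + 1 + 1) - r ^ (n + 1 + 1)
        = r' * (r' ^ (n + 1) - r ^ (n + 1)) + (r' - r) * r ^ (n + 1) := by ring
    have hp : u * ((r' - r) * (↑n + 1) * u ^ n) + (r' - r) * u ^ (n + 1)
        = (r' - r) * (↑(n + 1) + 1) * u ^ (n + 1) := by
      push_cast
      rw [pow_succ]; ring
    linarith

lemma xi_zero {β : ℕ → ℝ} : xi β 0 = 0 := by simp [xi]

lemma xi_nonneg {β : ℕ → ℝ} {r : ℝ} (hr : 0 ≤ r) : 0 ≤ xi β r :=
  tsum_nonneg fun p => mul_nonneg (sq_nonneg _) (pow_nonneg hr _)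

lemma summable_xi' {β : ℕ → ℝ}
    (hconv : ∀ r : ℝ, Summable fun p : ℕ => (β (p + 2)) ^ 2 * r ^ (p + 2))
    {u : ℝ} (hu : 0 ≤ u) :
    Summable (fun p : ℕ => ((p + 2 : ℕ) : ℝ) * (β (p + 2)) ^ 2 * u ^ (p + 1)) := by
  apply Summable.of_nonneg_of_le
    (fun p => by positivity)
    (fun p => ?_) (hconv (2 * max 1 u))
  have h1 : ((p + 2 : ℕ) : ℝ) ≤ 2 ^ (p + 2) := by
    calc ((p + 2 : ℕ) : ℝ) ≤ 2 ^ (p + 2 : ℕ) := by exact_mod_cast (Nat.lt_two_pow_self (n := p + 2)).le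
    _ = _ := by norm_cast
  have h2 : u ^ (p + 1) ≤ (max 1 u) ^ (p + 2) := by
    calc u ^ (p + 1) ≤ (max 1 u) ^ (p + 1) := pow_le_pow_left₀ hu (le_max_right _ _) _
    _ ≤ (max 1 u) ^ (p + 2) := pow_le_pow_right₀ (le_max_left _ _) (by omega)
  calc ((p + 2 : ℕ) : ℝ) * (β (p + 2)) ^ 2 * u ^ (p + 1)
      ≤ (2 ^ (p + 2)) * (β (p + 2)) ^ 2 * ((max 1 u) ^ (p + 2)) := by
        apply mul_le_mul (mul_le_mul_of_nonneg_right h1 (sq_nonneg _)) h2 (by positivity)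
          (by positivity)
    _ = (β (p + 2)) ^ 2 * (2 * max 1 u) ^ (p + 2) := by rw [mul_pow]; ring

lemma xi_sub_le {β : ℕ → ℝ}
    (hconv : ∀ r : ℝ, Summable fun p : ℕ => (β (p + 2)) ^ 2 * r ^ (p + 2))
    {r r' u : ℝ} (h0 : 0 ≤ r) (h1 : r ≤ r') (h2 : r' ≤ u) :
    xi β r' - xi β r ≤ (r' - r) * xi' β u := by
  have hu : 0 ≤ u := le_trans (h0.trans h1) h2
  have hs := summable_xi' hconv hu
  have hs2 : Summable (fun p : ℕ =>
      (r' - r) * (((p + 2 : ℕ) : ℝ) * (β (p + 2)) ^ 2 * u ^ (p + 1))) :=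
    hs.mul_left _
  rw [xi, xi, ← Summable.tsum_sub (hconv r') (hconv r)]
  have : (r' - r) * xi' β u
      = ∑' p : ℕ, (r' - r) * (((p + 2 : ℕ) : ℝ) * (β (p + 2)) ^ 2 * u ^ (p + 1)) := by
    rw [xi', tsum_mul_left]
  rw [this]
  apply Summable.tsum_le_tsum _ ((hconv r').sub (hconv r)) hs2
  intro p
  have hp := pow_sub_pow_le' h0 h1 h2 (p + 1)
  have := mul_le_mul_of_nonneg_left hp (sq_nonneg (β (p + 2)))
  calc (β (p + 2)) ^ 2 * r' ^ (p + 2) - (β (p + 2)) ^ 2 * r ^ (p + 2)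
      = (β (p + 2)) ^ 2 * (r' ^ (p + 1 + 1) - r ^ (p + 1 + 1)) := by ring
    _ ≤ (β (p + 2)) ^ 2 * ((r' - r) * (↑(p + 1) + 1) * u ^ (p + 1)) := this
    _ = (r' - r) * (((p + 2 : ℕ) : ℝ) * (β (p + 2)) ^ 2 * u ^ (p + 1)) := by push_cast; ring

section star
variable {β : ℕ → ℝ}
  (hconv : ∀ r : ℝ, Summable fun p : ℕ => (β (p + 2)) ^ 2 * r ^ (p + 2))
  (hβ : ∃ p : ℕ, β (p + 2) ≠ 0)

lemma xiStarSet_nonempty (s : ℝ) :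
    {y : ℝ | ∃ r : ℝ, 0 ≤ r ∧ y = r * s - xi β r}.Nonempty :=
  ⟨0, 0, le_refl 0, by simp [xi_zero]⟩

include hconv hβ in
lemma xiStarSet_le (s : ℝ) : ∀ y ∈ {y : ℝ | ∃ r : ℝ, 0 ≤ r ∧ y = r * s - xi β r},
    y ≤ s ^ 2 / (4 * (β (Classical.choose hβ + 2)) ^ 2) + (β (Classical.choose hβ + 2)) ^ 2 := by
  rintro y ⟨r, hr, rfl⟩
  set q := Classical.choose hβ with hq
  set c := (β (q + 2)) ^ 2 with hcdef
  have hc : 0 < c := by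
    have := Classical.choose_spec hβ
    positivity
  have hle : c * r ^ (q + 2) ≤ xi β r := by
    have := Summable.le_tsum (hconv r) q (fun j _ => mul_nonneg (sq_nonneg _) (pow_nonneg hr _))
    simpa [hcdef, xi] using this
  have hpow : r ^ 2 - 1 ≤ r ^ (q + 2) := by
    rcases le_or_gt r 1 with h | h
    · have : r ^ 2 ≤ 1 := by nlinarith
      have : (0:ℝ) ≤ r ^ (q + 2) := pow_nonneg hr _
      linarith
    · have : r ^ 2 ≤ r ^ (q + 2) := pow_le_pow_right₀ h.le (by omega)
      linarith
  have h2 : c * (r ^ 2 - 1) ≤ xi β r := le_trans (by nlinarith) hle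
  set d := s ^ 2 / (4 * c) with hddef
  have hd : 4 * c * d = s ^ 2 := by
    rw [hddef]; field_simp
  nlinarith [sq_nonneg (2 * c * r - s)]

include hconv hβ in
lemma xiStarSet_bddAbove (s : ℝ) :
    BddAbove {y : ℝ | ∃ r : ℝ, 0 ≤ r ∧ y = r * s - xi β r} :=
  ⟨_, xiStarSet_le hconv hβ s⟩

include hconv hβ in
lemma xiStar_nonneg (s : ℝ) : 0 ≤ xiStar β s :=
  le_csSup (xiStarSet_bddAbove hconv hβ s) ⟨0, le_refl 0, by simp [xi_zero]⟩

include hconv hβ in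
lemma xiStar_mono : Monotone (xiStar β) := by
  intro s s' hss
  apply csSup_le (xiStarSet_nonempty s)
  rintro y ⟨r, hr, rfl⟩
  have : r * s - xi β r ≤ r * s' - xi β r := by
    have := mul_le_mul_of_nonneg_left hss hr
    linarith
  exact this.trans (le_csSup (xiStarSet_bddAbove hconv hβ s') ⟨r, hr, rfl⟩)

include hconv hβ in
lemma xiStar_key {u s s' : ℝ} (hu : 0 ≤ u) (hs' : xi' β u ≤ s') (hss : s' ≤ s) :
    xiStar β s' + u * (s - s') ≤ xiStar β s := by
  rw [← le_sub_iff_add_le]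
  apply csSup_le (xiStarSet_nonempty s')
  rintro y ⟨r, hr, rfl⟩
  rw [le_sub_iff_add_le]
  rcases le_or_gt u r with h | h
  · have h1 : u * (s - s') ≤ r * (s - s') :=
      mul_le_mul_of_nonneg_right h (by linarith)
    have h2 : r * s - xi β r ≤ xiStar β s :=
      le_csSup (xiStarSet_bddAbove hconv hβ s) ⟨r, hr, rfl⟩
    nlinarith
  · have h1 : xi β u - xi β r ≤ (u - r) * xi' β u := xi_sub_le hconv hr h.le le_rfl
    have h2 : u * s - xi β u ≤ xiStar β s :=
      le_csSup (xiStarSet_bddAbove hconv hβ s) ⟨u, hu, rfl⟩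
    have h3 : (u - r) * xi' β u ≤ (u - r) * s' :=
      mul_le_mul_of_nonneg_left hs' (by linarith)
    nlinarith

end star

/-! ### Auxiliary lemmas on quantiles -/

section quant
variable {μ : Measure ℝ} [IsProbabilityMeasure μ]
  (hμ0 : μ (Set.Iio 0) = 0) (hμb : ∃ M : ℝ, μ (Set.Ioi M) = 0)

omit [IsProbabilityMeasure μ] in
lemma quantile_nonneg (x : ℝ) : 0 ≤ quantile μ x :=
  Real.sInf_nonneg (fun _ hs => hs.1)

include hμ0 hμb in
lemma quantile_set_nonempty {x : ℝ} (hx : x ≤ 1) :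
    {s : ℝ | 0 ≤ s ∧ x ≤ (μ (Set.Icc 0 s)).toReal}.Nonempty := by
  obtain ⟨M, hM⟩ := hμb
  refine ⟨max M 0, le_max_right _ _, ?_⟩
  have h1 : μ (Set.Icc 0 (max M 0))ᶜ = 0 := by
    have h2 : μ (Set.Ioi (max M 0)) = 0 :=
      measure_mono_null (Set.Ioi_subset_Ioi (le_max_left _ _)) hM
    have hsub : (Set.Icc 0 (max M 0))ᶜ ⊆ Set.Iio 0 ∪ Set.Ioi (max M 0) := by
      intro t ht
      simp only [Set.mem_compl_iff, Set.mem_Icc, not_and_or, not_le] at ht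
      simpa [Set.mem_union, Set.mem_Iio, Set.mem_Ioi] using ht
    exact measure_mono_null hsub (measure_union_null hμ0 h2)
  have h3 : μ (Set.Icc 0 (max M 0)) = 1 := by
    have := measure_add_measure_compl (μ := μ) (measurableSet_Icc (a := (0:ℝ)) (b := max M 0))
    rw [h1, add_zero] at this
    simp [this]
  rw [h3]
  simpa using hx

include hμ0 hμb in
lemma quantile_mono {x y : ℝ} (hxy : x ≤ y) (hy : y ≤ 1) :
    quantile μ x ≤ quantile μ y := by
  apply csInf_le_csInf ⟨0, fun s hs => hs.1⟩ (quantile_set_nonempty hμ0 hμb hy)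
  rintro s ⟨h1, h2⟩
  exact ⟨h1, hxy.trans h2⟩

include hμ0 hμb in
lemma quantile_min_monotone : Monotone (fun x => quantile μ (min x 1)) := by
  intro x y hxy
  exact quantile_mono hμ0 hμb (min_le_min_right 1 hxy) (min_le_right _ _)

end quant

/-- for probability measures `μ, ν` on `ℝ₊` with bounded support, `u ≥ 0` and
`a = ξ'(u) + μ⁻¹(1)`,
`∫₀¹ ξ*(ν⁻¹(x) - μ⁻¹(x)) dx ≥ ∫₀¹ ξ*(min(ν⁻¹(x), a) - μ⁻¹(x)) dx
  + u ∫₀¹ (ν⁻¹(x) - min(ν⁻¹(x), a)) dx`. -/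
theorem xiStar_integral_truncation (β : ℕ → ℝ)
    (hconv : ∀ r : ℝ, Summable fun p : ℕ => (β (p + 2)) ^ 2 * r ^ (p + 2))
    (hβ : ∃ p : ℕ, β (p + 2) ≠ 0)
    (μ ν : Measure ℝ) [IsProbabilityMeasure μ] [IsProbabilityMeasure ν]
    (hμ0 : μ (Set.Iio 0) = 0) (hν0 : ν (Set.Iio 0) = 0)
    (hμb : ∃ M : ℝ, μ (Set.Ioi M) = 0) (hνb : ∃ M : ℝ, ν (Set.Ioi M) = 0)
    (u : ℝ) (hu : 0 ≤ u) :
    (∫ x in (0:ℝ)..1,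
        xiStar β (min (quantile ν x) (xi' β u + quantile μ 1) - quantile μ x))
      + u * ∫ x in (0:ℝ)..1,
          (quantile ν x - min (quantile ν x) (xi' β u + quantile μ 1))
      ≤ ∫ x in (0:ℝ)..1, xiStar β (quantile ν x - quantile μ x) := by
  classical
  set a : ℝ := xi' β u + quantile μ 1 with ha
  set Qμ : ℝ → ℝ := fun x => quantile μ (min x 1) with hQμ
  set Qν : ℝ → ℝ := fun x => quantile ν (min x 1) with hQν
  have hQμm : Monotone Qμ := quantile_min_monotone hμ0 hμb
  have hQνm : Monotone Qν := quantile_min_monotone hν0 hνb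
  have hQμmeas : Measurable Qμ := hQμm.measurable
  have hQνmeas : Measurable Qν := hQνm.measurable
  have hstarmono : Monotone (xiStar β) := xiStar_mono hconv hβ
  have hstarmeas : Measurable (xiStar β) := hstarmono.measurable
  set F1 : ℝ → ℝ := fun x => xiStar β (min (Qν x) a - Qμ x) with hF1
  set F2 : ℝ → ℝ := fun x => Qν x - min (Qν x) a with hF2
  set F3 : ℝ → ℝ := fun x => xiStar β (Qν x - Qμ x) with hF3
  have hF1meas : Measurable F1 := hstarmeas.comp ((hQνmeas.min measurable_const).sub hQμmeas)
  have hF2meas : Measurable F2 := hQνmeas.sub (hQνmeas.min measurable_const)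
  have hF3meas : Measurable F3 := hstarmeas.comp (hQνmeas.sub hQμmeas)
  have hQμ0 : ∀ x, 0 ≤ Qμ x := fun x => quantile_nonneg _
  have hQν0 : ∀ x, 0 ≤ Qν x := fun x => quantile_nonneg _
  have hQν1 : ∀ x, Qν x ≤ quantile ν 1 :=
    fun x => quantile_mono hν0 hνb (min_le_right _ _) le_rfl
  have hQμ1 : ∀ x, Qμ x ≤ quantile μ 1 :=
    fun x => quantile_mono hμ0 hμb (min_le_right _ _) le_rfl
  haveI : IsFiniteMeasure (volume.restrict (Set.Ioc (0:ℝ) 1)) := by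
    constructor
    rw [Measure.restrict_apply_univ]
    simp [Real.volume_Ioc]
  have hbound : ∀ (F : ℝ → ℝ) (C : ℝ), Measurable F → (∀ x, ‖F x‖ ≤ C) →
      IntegrableOn F (Set.Ioc (0:ℝ) 1) volume := fun F C hm hb =>
    ⟨hm.aestronglyMeasurable, HasFiniteIntegral.of_bounded (C := C) (ae_of_all _ hb)⟩
  -- integrability of F1
  have hInt1 : IntegrableOn F1 (Set.Ioc (0:ℝ) 1) volume := by
    apply hbound F1 (xiStar β (quantile ν 1)) hF1meas
    intro x
    rw [Real.norm_eq_abs, abs_le]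
    constructor
    · have h0 := xiStar_nonneg hconv hβ (quantile ν 1)
      have h1 := xiStar_nonneg hconv hβ (min (Qν x) a - Qμ x)
      simp only [hF1]
      linarith
    · apply hstarmono
      have := hQν1 x
      have := hQμ0 x
      have := min_le_left (Qν x) a
      linarith
  have hInt3 : IntegrableOn F3 (Set.Ioc (0:ℝ) 1) volume := by
    apply hbound F3 (xiStar β (quantile ν 1)) hF3meas
    intro x
    rw [Real.norm_eq_abs, abs_le]
    constructor
    · have h0 := xiStar_nonneg hconv hβ (quantile ν 1)
      have h1 := xiStar_nonneg hconv hβ (Qν x - Qμ x)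
      simp only [hF3]
      linarith
    · apply hstarmono
      have := hQν1 x
      have := hQμ0 x
      linarith
  have hInt2 : IntegrableOn F2 (Set.Ioc (0:ℝ) 1) volume := by
    apply hbound F2 (quantile ν 1 - min 0 a) hF2meas
    intro x
    rw [Real.norm_eq_abs, abs_le]
    have h1 : min 0 a ≤ min (Qν x) a := min_le_min_right a (hQν0 x)
    have h2 : min (Qν x) a ≤ Qν x := min_le_left _ _
    have h3 := hQν1 x
    have h4 : (0:ℝ) ≤ quantile ν 1 := quantile_nonneg _
    have h5 : min 0 a ≤ 0 := min_le_left _ _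
    constructor <;> simp only [hF2] <;> linarith
  have hIntu2 : IntegrableOn (fun x => u * F2 x) (Set.Ioc (0:ℝ) 1) volume :=
    hInt2.const_mul u
  -- pointwise inequality
  have hpt : ∀ x ∈ Set.Ioc (0:ℝ) 1, F1 x + u * F2 x ≤ F3 x := by
    intro x hx
    have hm1 : Qμ x ≤ quantile μ 1 := hQμ1 x
    rcases le_or_gt (Qν x) a with h | h
    · have hmin : min (Qν x) a = Qν x := min_eq_left h
      simp only [hF1, hF2, hF3, hmin, sub_self, mul_zero, add_zero]
      exact le_refl _
    · have hmin : min (Qν x) a = a := min_eq_right h.le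
      have hkey : xiStar β (a - Qμ x) + u * ((Qν x - Qμ x) - (a - Qμ x))
          ≤ xiStar β (Qν x - Qμ x) := by
        apply xiStar_key hconv hβ hu
        · rw [ha]; linarith
        · linarith
      simp only [hF1, hF2, hF3, hmin]
      have : Qν x - a = (Qν x - Qμ x) - (a - Qμ x) := by ring
      rw [this]
      exact hkey
  -- convert interval integrals to set integrals
  rw [intervalIntegral.integral_of_le zero_le_one, intervalIntegral.integral_of_le zero_le_one,
    intervalIntegral.integral_of_le zero_le_one]
  have e1 : (∫ x in Set.Ioc (0:ℝ) 1, xiStar β (min (quantile ν x) a - quantile μ x))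
      = ∫ x in Set.Ioc (0:ℝ) 1, F1 x := by
    apply setIntegral_congr_fun measurableSet_Ioc
    intro x hx
    simp only [hF1, hQν, hQμ, min_eq_left hx.2]
  have e2 : (∫ x in Set.Ioc (0:ℝ) 1, (quantile ν x - min (quantile ν x) a))
      = ∫ x in Set.Ioc (0:ℝ) 1, F2 x := by
    apply setIntegral_congr_fun measurableSet_Ioc
    intro x hx
    simp only [hF2, hQν, min_eq_left hx.2]
  have e3 : (∫ x in Set.Ioc (0:ℝ) 1, xiStar β (quantile ν x - quantile μ x))
      = ∫ x in Set.Ioc (0:ℝ) 1, F3 x := by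
    apply setIntegral_congr_fun measurableSet_Ioc
    intro x hx
    simp only [hF3, hQν, hQμ, min_eq_left hx.2]
  rw [e1, e2, e3, ← integral_const_mul]
  calc (∫ x in Set.Ioc (0:ℝ) 1, F1 x) + ∫ x in Set.Ioc (0:ℝ) 1, u * F2 x
      = ∫ x in Set.Ioc (0:ℝ) 1, (F1 x + u * F2 x) := (integral_add hInt1 hIntu2).symm
    _ ≤ ∫ x in Set.Ioc (0:ℝ) 1, F3 x :=
        setIntegral_mono_on (hInt1.add hIntu2) hInt3 measurableSet_Ioc hpt
end

section
/- Let μ and ν be Borel probability measures on ℝ₊ = [0,∞) with bounded support. Then the function s ↦ min( ν([0,s]), μ([0,s]) ) on ℝ₊ is the cumulative distribution function of a Borel probability measure ν̃ on ℝ₊ with bounded support, and the quantile function of ν̃ satisfies ν̃⁻¹(r) = max( ν⁻¹(r), μ⁻¹(r) ) for every r ∈ (0,1]. -/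
open MeasureTheory

open Filter ProbabilityTheory Set

/-- The pointwise min of two Stieltjes functions. -/
noncomputable def StieltjesFunction.min (f g : StieltjesFunction ℝ) : StieltjesFunction ℝ where
  toFun := fun x => Min.min (f x) (g x)
  mono' := f.mono.min g.mono
  right_continuous' := fun x => ((f.right_continuous x).min (g.right_continuous x))

lemma sInf_inter_upper {A B : Set ℝ}
    (hA0 : ∀ x ∈ A, (0:ℝ) ≤ x) (hB0 : ∀ x ∈ B, (0:ℝ) ≤ x)
    (hAup : ∀ x ∈ A, ∀ y, x ≤ y → y ∈ A) (hBup : ∀ x ∈ B, ∀ y, x ≤ y → y ∈ B)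
    (hAne : A.Nonempty) (hBne : B.Nonempty) :
    sInf (A ∩ B) = Max.max (sInf A) (sInf B) := by
  obtain ⟨a, ha⟩ := hAne
  obtain ⟨b, hb⟩ := hBne
  have hABne : (A ∩ B).Nonempty :=
    ⟨Max.max a b, hAup a ha _ (le_max_left _ _), hBup b hb _ (le_max_right _ _)⟩
  have hAbdd : BddBelow A := ⟨0, hA0⟩
  have hBbdd : BddBelow B := ⟨0, hB0⟩
  have hABbdd : BddBelow (A ∩ B) := ⟨0, fun x hx => hA0 x hx.1⟩
  apply le_antisymm
  · -- sInf (A ∩ B) ≤ max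
    apply le_of_forall_pos_le_add
    intro ε hε
    obtain ⟨x, hxA, hx⟩ := Real.lt_sInf_add_pos ⟨a, ha⟩ hε (s := A)
    obtain ⟨y, hyB, hy⟩ := Real.lt_sInf_add_pos ⟨b, hb⟩ hε (s := B)
    have hz : Max.max x y ∈ A ∩ B :=
      ⟨hAup x hxA _ (le_max_left _ _), hBup y hyB _ (le_max_right _ _)⟩
    calc sInf (A ∩ B) ≤ Max.max x y := csInf_le hABbdd hz
      _ ≤ Max.max (sInf A) (sInf B) + ε := by
          rcases max_cases x y with ⟨h, _⟩ | ⟨h, _⟩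
          · rw [h]; exact le_trans hx.le (add_le_add_left (le_max_left _ _) ε)
          · rw [h]; exact le_trans hy.le (add_le_add_left (le_max_right _ _) ε)
  · exact max_le (le_csInf hABne fun x hx => csInf_le hAbdd hx.1)
      (le_csInf hABne fun x hx => csInf_le hBbdd hx.2)

/-- for probability measures `μ, ν` on `ℝ₊` with bounded support, the function
`s ↦ min(ν([0,s]), μ([0,s]))` on `ℝ₊` is the c.d.f. of a probability measure `ν̃` on `ℝ₊` with
bounded support, whose quantile function is `ν̃⁻¹(r) = max(ν⁻¹(r), μ⁻¹(r))` for `r ∈ (0,1]`. -/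
theorem exists_measure_cdf_min (μ ν : Measure ℝ)
    [IsProbabilityMeasure μ] [IsProbabilityMeasure ν]
    (hμ0 : μ (Set.Iio 0) = 0) (hν0 : ν (Set.Iio 0) = 0)
    (hμb : ∃ M : ℝ, μ (Set.Ioi M) = 0) (hνb : ∃ M : ℝ, ν (Set.Ioi M) = 0) :
    ∃ νt : Measure ℝ, IsProbabilityMeasure νt ∧
      νt (Set.Iio 0) = 0 ∧ (∃ M : ℝ, νt (Set.Ioi M) = 0) ∧
      (∀ s : ℝ, 0 ≤ s →
        (νt (Set.Icc 0 s)).toReal =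
          min ((ν (Set.Icc 0 s)).toReal) ((μ (Set.Icc 0 s)).toReal)) ∧
      (∀ r : ℝ, r ∈ Set.Ioc (0:ℝ) 1 →
        quantile νt r = max (quantile ν r) (quantile μ r)) := by
  obtain ⟨Mμ, hMμ⟩ := hμb
  obtain ⟨Mν, hMν⟩ := hνb
  set F : StieltjesFunction ℝ := (cdf ν).min (cdf μ) with hF
  have hFval : ∀ x, F x = min (cdf ν x) (cdf μ x) := fun x => rfl
  have hbot : Tendsto F atBot (nhds 0) := by
    have := (tendsto_cdf_atBot ν).min (tendsto_cdf_atBot μ)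
    rw [min_self] at this; exact this
  have htop : Tendsto F atTop (nhds 1) := by
    have := (tendsto_cdf_atTop ν).min (tendsto_cdf_atTop μ)
    rw [min_self] at this; exact this
  set νt := F.measure with hνt
  have hIic : ∀ x, νt (Set.Iic x) = ENNReal.ofReal (F x) := by
    intro x
    rw [hνt, F.measure_Iic hbot, sub_zero]
  -- CDF values are zero for negative x
  have hcdf_neg : ∀ (κ : Measure ℝ) [IsProbabilityMeasure κ], κ (Set.Iio 0) = 0 →
      ∀ x < (0:ℝ), cdf κ x = 0 := by
    intro κ _ hκ x hx
    rw [cdf_eq_real, measureReal_def]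
    have : κ (Set.Iic x) = 0 :=
      measure_mono_null (Set.Iic_subset_Iio.mpr hx) hκ
    simp [this]
  have hFneg : ∀ x < (0:ℝ), F x = 0 := by
    intro x hx
    rw [hFval, hcdf_neg ν hν0 x hx, hcdf_neg μ hμ0 x hx, min_self]
  -- νt (Iio 0) = 0
  have hνt0 : νt (Set.Iio 0) = 0 := by
    have hsub : Set.Iio (0:ℝ) ⊆ ⋃ n : ℕ, Set.Iic (-(1:ℝ)/(n+1)) := by
      intro x hx
      simp only [Set.mem_Iio] at hx
      obtain ⟨n, hn⟩ := exists_nat_one_div_lt (show (0:ℝ) < -x by linarith)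
      refine Set.mem_iUnion.mpr ⟨n, ?_⟩
      simp only [Set.mem_Iic]
      rw [neg_div]
      linarith [hn.le]
    refine le_antisymm (le_trans (measure_mono hsub) ?_) zero_le
    refine le_trans (measure_iUnion_le _) ?_
    have : ∀ n : ℕ, νt (Set.Iic (-(1:ℝ)/(n+1))) = 0 := by
      intro n
      rw [hIic, hFneg]
      · simp
      · rw [neg_div]
        have : (0:ℝ) < 1/(n+1) := by positivity
        linarith
    simp [this]
  -- cdf = 1 past the support bound
  have hcdf_one : ∀ (κ : Measure ℝ) [IsProbabilityMeasure κ] (Mk : ℝ), κ (Set.Ioi Mk) = 0 →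
      ∀ x, Mk ≤ x → cdf κ x = 1 := by
    intro κ _ Mk hκ x hx
    rw [cdf_eq_real, measureReal_def]
    have h1 : κ (Set.Ioi x) = 0 := measure_mono_null (Set.Ioi_subset_Ioi hx) hκ
    have := measure_add_measure_compl (μ := κ) (s := Set.Iic x) measurableSet_Iic
    rw [Set.compl_Iic, h1, add_zero, measure_univ] at this
    simp [this]
  set M : ℝ := max Mμ Mν with hM
  have hFM : ∀ x, M ≤ x → F x = 1 := by
    intro x hx
    rw [hFval, hcdf_one ν Mν hMν x (le_trans (le_max_right _ _) hx),
      hcdf_one μ Mμ hMμ x (le_trans (le_max_left _ _) hx), min_self]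
  -- probability measure
  have huniv : νt Set.univ = 1 := by
    rw [hνt, F.measure_univ hbot htop]
    simp
  have hprob : IsProbabilityMeasure νt := ⟨huniv⟩
  -- bounded support
  have hνtb : νt (Set.Ioi M) = 0 := by
    have : Set.Ioi M = (Set.Iic M)ᶜ := by simp [Set.compl_Iic]
    rw [this, measure_compl measurableSet_Iic (measure_ne_top _ _), huniv, hIic, hFM M le_rfl]
    simp
  -- Icc vs Iic
  have hIccIic : ∀ (κ : Measure ℝ), κ (Set.Iio 0) = 0 →
      ∀ s : ℝ, 0 ≤ s → κ (Set.Icc 0 s) = κ (Set.Iic s) := by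
    intro κ hκ s _
    have : Set.Icc 0 s = Set.Iic s \ Set.Iio 0 := by
      ext x; simp [Set.mem_Icc, Set.mem_Iic, Set.mem_Iio, not_lt, and_comm]
    rw [this, measure_diff_null hκ]
  have hF0 : ∀ x, 0 ≤ F x := by
    intro x
    rw [hFval]
    exact le_min (cdf_nonneg ν x) (cdf_nonneg μ x)
  have hcdfmain : ∀ s : ℝ, 0 ≤ s →
      (νt (Set.Icc 0 s)).toReal = min ((ν (Set.Icc 0 s)).toReal) ((μ (Set.Icc 0 s)).toReal) := by
    intro s hs
    rw [hIccIic νt hνt0 s hs, hIccIic ν hν0 s hs, hIccIic μ hμ0 s hs, hIic,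
      ENNReal.toReal_ofReal (hF0 s), hFval, cdf_eq_real, cdf_eq_real, measureReal_def, measureReal_def]
  refine ⟨νt, hprob, hνt0, ⟨M, hνtb⟩, hcdfmain, ?_⟩
  -- quantile part
  intro r hr
  obtain ⟨hr0, hr1⟩ := hr
  -- the three defining sets
  set Aν := {s : ℝ | 0 ≤ s ∧ r ≤ (ν (Set.Icc 0 s)).toReal} with hAν
  set Aμ := {s : ℝ | 0 ≤ s ∧ r ≤ (μ (Set.Icc 0 s)).toReal} with hAμ
  have hset : {s : ℝ | 0 ≤ s ∧ r ≤ (νt (Set.Icc 0 s)).toReal} = Aν ∩ Aμ := by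
    ext s
    simp only [Set.mem_setOf_eq, Set.mem_inter_iff, hAν, hAμ]
    constructor
    · rintro ⟨hs, hrs⟩
      rw [hcdfmain s hs, le_min_iff] at hrs
      exact ⟨⟨hs, hrs.1⟩, ⟨hs, hrs.2⟩⟩
    · rintro ⟨⟨hs, h1⟩, ⟨_, h2⟩⟩
      exact ⟨hs, by rw [hcdfmain s hs]; exact le_min h1 h2⟩
  have hmono : ∀ (κ : Measure ℝ) [IsProbabilityMeasure κ],
      ∀ x ∈ {s : ℝ | 0 ≤ s ∧ r ≤ (κ (Set.Icc 0 s)).toReal}, ∀ y, x ≤ y →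
        y ∈ {s : ℝ | 0 ≤ s ∧ r ≤ (κ (Set.Icc 0 s)).toReal} := by
    intro κ _ x hx y hxy
    refine ⟨le_trans hx.1 hxy, le_trans hx.2 ?_⟩
    have h : κ (Set.Icc 0 x) ≤ κ (Set.Icc 0 y) :=
      measure_mono (Set.Icc_subset_Icc (le_refl (0:ℝ)) hxy)
    exact ENNReal.toReal_mono (measure_lt_top κ _).ne h
  have hne : ∀ (κ : Measure ℝ) [IsProbabilityMeasure κ] (Mk : ℝ), κ (Set.Ioi Mk) = 0 →
      κ (Set.Iio 0) = 0 →
      {s : ℝ | 0 ≤ s ∧ r ≤ (κ (Set.Icc 0 s)).toReal}.Nonempty := by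
    intro κ _ Mk hκ hκ0
    refine ⟨max Mk 0, le_max_right _ _, ?_⟩
    rw [hIccIic κ hκ0 _ (le_max_right _ _)]
    have : (κ (Set.Iic (max Mk 0))).toReal = cdf κ (max Mk 0) := (by rw [cdf_eq_real, measureReal_def])
    rw [this, hcdf_one κ Mk hκ _ (le_max_left _ _)]
    exact hr1
  unfold quantile
  rw [hset]
  exact sInf_inter_upper (fun x hx => hx.1) (fun x hx => hx.1)
    (hmono ν) (hmono μ) (hne ν Mν hMν hν0) (hne μ Mμ hMμ hμ0)
end

section
/- Let n ≥ 1 and let A be an n×n real symmetric matrix with nonnegative entries such that A_{ii} ≥ A_{ij} for all i, j, and such that the ultrametric inequality A_{ij} ≥ min(A_{ik}, A_{kj}) holds for all i, j, k. Then, for every nondecreasing function g : [0,∞) → [0,∞), the n×n matrix with entries g(A_{ij}) is positive semidefinite. In particular, A itself is positive semidefinite. -/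
open Finset

lemma ultra_key (n : ℕ) : ∀ (N : ℕ) (S : Finset (Fin n)), S.card ≤ N →
    ∀ (A : Matrix (Fin n) (Fin n) ℝ),
    (∀ i ∈ S, ∀ j ∈ S, A i j = A j i) →
    (∀ i ∈ S, ∀ j ∈ S, 0 ≤ A i j) →
    (∀ i ∈ S, ∀ j ∈ S, A i j ≤ A i i) →
    (∀ i ∈ S, ∀ j ∈ S, ∀ k ∈ S, min (A i k) (A k j) ≤ A i j) →
    ∀ x : Fin n → ℝ, 0 ≤ ∑ i ∈ S, ∑ j ∈ S, x i * A i j * x j := by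
  intro N
  induction N with
  | zero =>
    intro S hS A _ _ _ _ x
    have : S = ∅ := Finset.card_eq_zero.mp (Nat.le_zero.mp hS)
    simp [this]
  | succ N ih =>
    intro S hS A hsymm hnonneg hdiag hultra x
    rcases Finset.eq_empty_or_nonempty S with rfl | hne
    · simp
    -- minimum entry
    obtain ⟨p, hp, hmin⟩ := (S ×ˢ S).exists_min_image (fun p => A p.1 p.2)
      (hne.product hne)
    obtain ⟨hp1, hp2⟩ := Finset.mem_product.mp hp
    set i0 := p.1
    set j0 := p.2
    set m := A i0 j0 with hm
    have hmin' : ∀ i ∈ S, ∀ j ∈ S, m ≤ A i j := fun i hi j hj =>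
      hmin (i, j) (Finset.mem_product.mpr ⟨hi, hj⟩)
    have hm0 : 0 ≤ m := hnonneg _ hp1 _ hp2
    -- singleton case
    rcases eq_or_lt_of_le (Finset.one_le_card.mpr hne) with h1 | h2
    · obtain ⟨a, rfl⟩ := Finset.card_eq_one.mp h1.symm
      simp only [Finset.sum_singleton]
      have := hnonneg a (Finset.mem_singleton_self a) a (Finset.mem_singleton_self a)
      nlinarith [sq_nonneg (x a)]
    -- main case: |S| ≥ 2
    set P : Fin n → Prop := fun j => m < A i0 j ∨ j = i0 with hP
    set T := S.filter P with hT
    set U := S.filter (fun j => ¬ P j) with hU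
    have hTS : T ⊆ S := Finset.filter_subset _ _
    have hUS : U ⊆ S := Finset.filter_subset _ _
    have hi0T : i0 ∈ T := Finset.mem_filter.mpr ⟨hp1, Or.inr rfl⟩
    have hi0U : i0 ∉ U := fun h => (Finset.mem_filter.mp h).2 (Or.inr rfl)
    -- there is an element of S not in T
    have hTne : ∃ j ∈ S, ¬ P j := by
      rcases eq_or_ne i0 j0 with he | he
      · obtain ⟨j', hj', hji⟩ := Finset.exists_mem_ne h2 i0
        refine ⟨j', hj', ?_⟩
        rintro (hlt | hje)
        · exact absurd (le_of_le_of_eq (hdiag i0 hp1 j' hj') (by rw [hm, ← he])) (not_le.mpr hlt)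
        · exact hji hje
      · refine ⟨j0, hp2, ?_⟩
        rintro (hlt | hje)
        · exact lt_irrefl _ hlt
        · exact he hje.symm
    -- cross entries equal m
    have hcross : ∀ i ∈ T, ∀ j ∈ U, A i j = m := by
      intro i hi j hj
      obtain ⟨hiS, hiP⟩ := Finset.mem_filter.mp hi
      obtain ⟨hjS, hjP⟩ := Finset.mem_filter.mp hj
      simp only [hP, not_or, not_lt] at hjP
      obtain ⟨hj1, hj2⟩ := hjP
      have hij0 : A i0 j = m := le_antisymm hj1 (hmin' _ hp1 _ hjS)
      rcases hiP with hlt | rfl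
      · by_contra hne'
        have h3 : m < A i j := lt_of_le_of_ne (hmin' _ hiS _ hjS) (Ne.symm hne')
        have h4 := hultra i0 hp1 j hjS i hiS
        rw [hij0] at h4
        exact absurd (lt_of_lt_of_le (lt_min hlt h3) h4) (lt_irrefl m)
      · exact hij0
    -- the shifted matrix
    set B : Matrix (Fin n) (Fin n) ℝ := Matrix.of (fun i j => A i j - m) with hB
    have hBsymm : ∀ i ∈ S, ∀ j ∈ S, B i j = B j i := fun i hi j hj => by
      simp [hB, hsymm i hi j hj]
    have hBnonneg : ∀ i ∈ S, ∀ j ∈ S, 0 ≤ B i j := fun i hi j hj => by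
      simp [hB, hmin' i hi j hj]
    have hBdiag : ∀ i ∈ S, ∀ j ∈ S, B i j ≤ B i i := fun i hi j hj => by
      simp only [hB, Matrix.of_apply]
      exact sub_le_sub_right (hdiag i hi j hj) m
    have hBultra : ∀ i ∈ S, ∀ j ∈ S, ∀ k ∈ S, min (B i k) (B k j) ≤ B i j := by
      intro i hi j hj k hk
      simp only [hB, Matrix.of_apply]
      rcases min_le_iff.mp (hultra i hi j hj k hk) with h | h
      · exact min_le_of_left_le (sub_le_sub_right h m)
      · exact min_le_of_right_le (sub_le_sub_right h m)
    -- quadratic form identity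
    have e1 : m * ((∑ i ∈ S, x i) * (∑ i ∈ S, x i))
        = ∑ i ∈ S, ∑ j ∈ S, m * (x i * x j) := by
      rw [Finset.sum_mul_sum, Finset.mul_sum]
      exact Finset.sum_congr rfl fun i _ => by rw [Finset.mul_sum]
    have e2 : (∑ i ∈ S, ∑ j ∈ S, x i * A i j * x j)
        = (∑ i ∈ S, ∑ j ∈ S, x i * B i j * x j)
          + m * ((∑ i ∈ S, x i) * (∑ i ∈ S, x i)) := by
      rw [e1, ← Finset.sum_add_distrib]
      refine Finset.sum_congr rfl fun i _ => ?_
      rw [← Finset.sum_add_distrib]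
      refine Finset.sum_congr rfl fun j _ => ?_
      simp only [hB, Matrix.of_apply]
      ring
    -- split the B-sum over T and U
    have hsplit : ∀ f : Fin n → ℝ, ∑ i ∈ S, f i = (∑ i ∈ T, f i) + (∑ i ∈ U, f i) :=
      fun f => (Finset.sum_filter_add_sum_filter_not S P f).symm
    have e3 : (∑ i ∈ S, ∑ j ∈ S, x i * B i j * x j)
        = (∑ i ∈ T, ∑ j ∈ T, x i * B i j * x j)
          + (∑ i ∈ U, ∑ j ∈ U, x i * B i j * x j) := by
      rw [hsplit (fun i => ∑ j ∈ S, x i * B i j * x j)]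
      have hTz : ∀ i ∈ T, ∑ j ∈ S, x i * B i j * x j = ∑ j ∈ T, x i * B i j * x j := by
        intro i hi
        rw [hsplit (fun j => x i * B i j * x j)]
        have hz : ∑ j ∈ U, x i * B i j * x j = 0 := by
          refine Finset.sum_eq_zero fun j hj => ?_
          have : B i j = 0 := by simp [hB, hcross i hi j hj]
          simp [this]
        rw [hz, add_zero]
      have hUz : ∀ i ∈ U, ∑ j ∈ S, x i * B i j * x j = ∑ j ∈ U, x i * B i j * x j := by
        intro i hi
        rw [hsplit (fun j => x i * B i j * x j)]
        have hz : ∑ j ∈ T, x i * B i j * x j = 0 := by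
          refine Finset.sum_eq_zero fun j hj => ?_
          have hBji : B j i = 0 := by simp [hB, hcross j hj i hi]
          have hBij : B i j = 0 := by rw [hBsymm i (hUS hi) j (hTS hj)]; exact hBji
          simp [hBij]
        rw [hz, zero_add]
      rw [Finset.sum_congr rfl hTz, Finset.sum_congr rfl hUz]
    -- cardinality bounds
    obtain ⟨j', hj'S, hj'P⟩ := hTne
    have hTcard : T.card ≤ N := by
      have hss : T ⊂ S := (Finset.ssubset_iff_of_subset hTS).mpr
        ⟨j', hj'S, fun h => hj'P (Finset.mem_filter.mp h).2⟩
      have := Finset.card_lt_card hss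
      omega
    have hUcard : U.card ≤ N := by
      have hss : U ⊂ S := (Finset.ssubset_iff_of_subset hUS).mpr ⟨i0, hp1, hi0U⟩
      have := Finset.card_lt_card hss
      omega
    have hTpos := ih T hTcard B (fun i hi j hj => hBsymm i (hTS hi) j (hTS hj))
      (fun i hi j hj => hBnonneg i (hTS hi) j (hTS hj))
      (fun i hi j hj => hBdiag i (hTS hi) j (hTS hj))
      (fun i hi j hj k hk => hBultra i (hTS hi) j (hTS hj) k (hTS hk)) x
    have hUpos := ih U hUcard B (fun i hi j hj => hBsymm i (hUS hi) j (hUS hj))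
      (fun i hi j hj => hBnonneg i (hUS hi) j (hUS hj))
      (fun i hi j hj => hBdiag i (hUS hi) j (hUS hj))
      (fun i hi j hj k hk => hBultra i (hUS hi) j (hUS hj) k (hUS hk)) x
    rw [e2, e3]
    have : 0 ≤ m * ((∑ i ∈ S, x i) * (∑ i ∈ S, x i)) :=
      mul_nonneg hm0 (mul_self_nonneg _)
    linarith



/-- if `A` is a symmetric `n × n` matrix with nonnegative entries, diagonally
dominant in the sense `A i i ≥ A i j`, and satisfying the ultrametric inequality
`A i j ≥ min (A i k) (A k j)`, then for every nondecreasing `g : [0,∞) → [0,∞)`, the matrix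
`(g (A i j))_{i,j}` is positive semidefinite; in particular `A` itself is. -/
theorem ultrametric_matrix_posSemidef (n : ℕ) (hn : 1 ≤ n)
    (A : Matrix (Fin n) (Fin n) ℝ) (hsymm : A.IsSymm)
    (hnonneg : ∀ i j, 0 ≤ A i j)
    (hdiag : ∀ i j, A i j ≤ A i i)
    (hultra : ∀ i j k, min (A i k) (A k j) ≤ A i j)
    (g : ℝ → ℝ) (hg_mono : MonotoneOn g (Set.Ici 0))
    (hg_nonneg : ∀ x : ℝ, 0 ≤ x → 0 ≤ g x) :
    (Matrix.of fun i j => g (A i j)).PosSemidef ∧ A.PosSemidef := by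
  have hsymm' : ∀ i j, A i j = A j i := fun i j => hsymm.apply j i
  have key : ∀ (M : Matrix (Fin n) (Fin n) ℝ),
      (∀ i j, M i j = M j i) → (∀ i j, 0 ≤ M i j) → (∀ i j, M i j ≤ M i i) →
      (∀ i j k, min (M i k) (M k j) ≤ M i j) → M.PosSemidef := by
    intro M h1 h2 h3 h4
    constructor
    · ext i j
      simp [Matrix.conjTranspose_apply, h1 j i]
    · intro x
      have := ultra_key n (Finset.univ.card) Finset.univ le_rfl M
        (fun i _ j _ => h1 i j) (fun i _ j _ => h2 i j)
        (fun i _ j _ => h3 i j) (fun i _ j _ k _ => h4 i j k) x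
      simpa [dotProduct, Matrix.mulVec, Finset.mul_sum, mul_assoc, Finsupp.sum_fintype] using this
  constructor
  · refine key _ (fun i j => by simp [hsymm' i j]) (fun i j => hg_nonneg _ (hnonneg i j))
      (fun i j => hg_mono (hnonneg i j) (hnonneg i i) (hdiag i j)) ?_
    intro i j k
    simp only [Matrix.of_apply]
    have hmin : min (g (A i k)) (g (A k j)) = g (min (A i k) (A k j)) := by
      rcases le_total (A i k) (A k j) with h | h
      · rw [min_eq_left h, min_eq_left (hg_mono (hnonneg i k) (hnonneg k j) h)]
      · rw [min_eq_right h, min_eq_right (hg_mono (hnonneg k j) (hnonneg i k) h)]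
    rw [hmin]
    exact hg_mono (le_min (hnonneg i k) (hnonneg k j)) (hnonneg i j) (hultra i j k)
  · exact key A hsymm' hnonneg hdiag hultra
end

section
/- Let S > 0, R > 0. Let v : [0,S] × ℝ → [0,∞) be Lipschitz continuous, let b : [0,S] × ℝ → ℝ be measurable with |b(s,h)| ≤ R for all (s,h) and with h ↦ b(s,h) nondecreasing for each s ∈ [0,S], and let g : [0,S] × ℝ → ℝ be locally integrable. Suppose that at almost every (s,h) ∈ (0,S) × ℝ the function v is differentiable and satisfies 2 ∂_s v(s,h) = b(s,h) ∂_h v(s,h) + g(s,h). Then for every s ∈ [0,S], ∫_{−R(S−s)}^{R(S−s)} v(s,h) dh ≤ ∫_{−RS}^{RS} v(0,h) dh + (1/2) ∫_0^s ∫_{−R(S−r)}^{R(S−r)} |g(r,h)| dh dr. -/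
open MeasureTheory Set


/-- `deriv` of a Lipschitz function is bounded by the Lipschitz constant. -/
lemma abs_deriv_le_of_lip {K : NNReal} {f : ℝ → ℝ} (hf : LipschitzWith K f) (x : ℝ) :
    |deriv f x| ≤ K := by
  by_cases hd : DifferentiableAt ℝ f x
  · have h1 : ‖fderiv ℝ f x‖ ≤ K := norm_fderiv_le_of_lipschitz ℝ hf
    have h2 : deriv f x = fderiv ℝ f x 1 := by rw [fderiv_apply_one_eq_deriv]
    calc |deriv f x| = ‖fderiv ℝ f x 1‖ := by rw [h2, Real.norm_eq_abs]
      _ ≤ ‖fderiv ℝ f x‖ * ‖(1:ℝ)‖ := (fderiv ℝ f x).le_opNorm 1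
      _ ≤ K := by simpa using h1
  · simp [deriv_zero_of_not_differentiableAt hd, NNReal.coe_nonneg]

/-- Integral inequality for monotone continuous functions. -/
lemma mono_integral_deriv_le {f : ℝ → ℝ} (hm : Monotone f) (hc : Continuous f)
    {x y : ℝ} (hxy : x ≤ y) : ∫ t in Ioc x y, deriv f t ≤ f y - f x := by
  set F : StieltjesFunction ℝ := ⟨f, hm, fun z => (hc.continuousAt).continuousWithinAt⟩ with hFdef
  have hcoe : (F : ℝ → ℝ) = f := rfl
  have hae : ∀ᵐ t, deriv f t = (F.measure.rnDeriv volume t).toReal := by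
    filter_upwards [F.ae_hasDerivAt] with t ht
    exact ht.deriv
  have hfin : F.measure (Ioc x y) ≠ ⊤ := by
    rw [F.measure_Ioc]; exact ENNReal.ofReal_ne_top
  calc ∫ t in Ioc x y, deriv f t
      = ∫ t in Ioc x y, (F.measure.rnDeriv volume t).toReal :=
        integral_congr_ae (ae_restrict_of_ae hae)
    _ ≤ (F.measure (Ioc x y)).toReal := Measure.setIntegral_toReal_rnDeriv_le hfin
    _ = f y - f x := by
        rw [F.measure_Ioc, hcoe, ENNReal.toReal_ofReal (by linarith [hm hxy])]


/-- bounded a.e.-measurable functions are integrable on bounded intervals -/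
lemma integrableOn_Ioc_of_bdd {f : ℝ → ℝ} {C x y : ℝ}
    (hm : AEStronglyMeasurable f volume) (hb : ∀ t, |f t| ≤ C) :
    IntegrableOn f (Ioc x y) volume := by
  refine Integrable.mono' (g := fun _ => C) ?_ hm.restrict
    (ae_of_all _ fun t => by simpa [Real.norm_eq_abs] using hb t)
  refine integrableOn_const ?_
  rw [Real.volume_Ioc]; exact ENNReal.ofReal_ne_top

lemma lip_mul_const {K : NNReal} : LipschitzWith K (fun t : ℝ => (K : ℝ) * t) := by
  refine LipschitzWith.of_dist_le_mul fun a b => ?_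
  rw [Real.dist_eq, Real.dist_eq, ← mul_sub, abs_mul, abs_of_nonneg K.coe_nonneg]

/-- FTC for Lipschitz functions on `ℝ`. -/
lemma lip_integral_deriv {K : NNReal} {f : ℝ → ℝ} (hf : LipschitzWith K f)
    {x y : ℝ} (hxy : x ≤ y) : ∫ t in Ioc x y, deriv f t = f y - f x := by
  set g₁ : ℝ → ℝ := fun t => f t + K * t with hg₁
  set g₂ : ℝ → ℝ := fun t => K * t - f t with hg₂
  have hdist : ∀ a b : ℝ, |f a - f b| ≤ K * |a - b| := fun a b => by
    have := hf.dist_le_mul a b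
    rwa [Real.dist_eq, Real.dist_eq] at this
  have hm₁ : Monotone g₁ := by
    intro a b hab
    have := hdist a b
    rw [abs_sub_le_iff, abs_of_nonpos (by linarith : a - b ≤ 0)] at this
    simp only [hg₁]
    nlinarith [this.1, this.2, K.coe_nonneg]
  have hm₂ : Monotone g₂ := by
    intro a b hab
    have := hdist a b
    rw [abs_sub_le_iff, abs_of_nonpos (by linarith : a - b ≤ 0)] at this
    simp only [hg₂]
    nlinarith [this.1, this.2, K.coe_nonneg]
  have hg₁lip : LipschitzWith (K + K) g₁ := hf.add lip_mul_const
  have hg₂lip : LipschitzWith (K + K) g₂ := lip_mul_const.sub hf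
  have hc₁ : Continuous g₁ := hg₁lip.continuous
  have hc₂ : Continuous g₂ := hg₂lip.continuous
  -- a.e. derivative relations
  have hder : ∀ᵐ t : ℝ, deriv g₁ t = deriv f t + K ∧ deriv g₂ t = K - deriv f t := by
    filter_upwards [hf.ae_differentiableAt (μ := volume)] with t ht
    have hft : HasDerivAt f (deriv f t) t := ht.hasDerivAt
    have hKt : HasDerivAt (fun t : ℝ => (K:ℝ) * t) (K : ℝ) t := by
      simpa using (hasDerivAt_id t).const_mul (K : ℝ)
    exact ⟨(hft.add hKt).deriv, (hKt.sub hft).deriv⟩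
  -- integrabilities
  have hi₁ : IntegrableOn (deriv g₁) (Ioc x y) volume :=
    integrableOn_Ioc_of_bdd (measurable_deriv g₁).aestronglyMeasurable
      (abs_deriv_le_of_lip hg₁lip)
  have hi₂ : IntegrableOn (deriv g₂) (Ioc x y) volume :=
    integrableOn_Ioc_of_bdd (measurable_deriv g₂).aestronglyMeasurable
      (abs_deriv_le_of_lip hg₂lip)
  have hif : IntegrableOn (deriv f) (Ioc x y) volume :=
    integrableOn_Ioc_of_bdd (measurable_deriv f).aestronglyMeasurable
      (abs_deriv_le_of_lip hf)
  have hsum : (∫ t in Ioc x y, deriv g₁ t) + (∫ t in Ioc x y, deriv g₂ t)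
      = 2 * K * (y - x) := by
    rw [← integral_add hi₁ hi₂]
    have : ∫ t in Ioc x y, (deriv g₁ t + deriv g₂ t) = ∫ _t in Ioc x y, (2 * (K:ℝ)) := by
      refine integral_congr_ae (ae_restrict_of_ae ?_)
      filter_upwards [hder] with t ⟨h1, h2⟩
      rw [h1, h2]; ring
    rw [this, setIntegral_const, Real.volume_real_Ioc, max_eq_left (by linarith),
      smul_eq_mul]
    ring
  have hA₁ : ∫ t in Ioc x y, deriv g₁ t ≤ f y - f x + K * (y - x) := by
    have := mono_integral_deriv_le hm₁ hc₁ hxy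
    simp only [hg₁] at this; linarith
  have hA₂ : ∫ t in Ioc x y, deriv g₂ t ≤ K * (y - x) - (f y - f x) := by
    have := mono_integral_deriv_le hm₂ hc₂ hxy
    simp only [hg₂] at this; linarith
  have hEq₁ : ∫ t in Ioc x y, deriv g₁ t = f y - f x + K * (y - x) := by linarith
  have hfg : ∫ t in Ioc x y, deriv f t = (∫ t in Ioc x y, deriv g₁ t) - K * (y - x) := by
    have : ∫ t in Ioc x y, deriv g₁ t
        = (∫ t in Ioc x y, deriv f t) + ∫ _t in Ioc x y, (K:ℝ) := by
      rw [← integral_add hif (integrableOn_const (by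
        rw [Real.volume_Ioc]; exact ENNReal.ofReal_ne_top))]
      refine integral_congr_ae (ae_restrict_of_ae ?_)
      filter_upwards [hder] with t ⟨h1, _⟩
      rw [h1]
    rw [this, setIntegral_const, Real.volume_real_Ioc, max_eq_left (by linarith),
      smul_eq_mul]
    ring
  rw [hfg, hEq₁]; ring

/-- interval-integral version of FTC for Lipschitz functions -/
lemma lip_intervalIntegral_deriv {K : NNReal} {f : ℝ → ℝ} (hf : LipschitzWith K f)
    {x y : ℝ} (hxy : x ≤ y) : ∫ t in x..y, deriv f t = f y - f x := by
  rw [intervalIntegral.integral_of_le hxy]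
  exact lip_integral_deriv hf hxy

lemma intervalIntegrable_of_bdd {f : ℝ → ℝ} {C x y : ℝ}
    (hm : AEStronglyMeasurable f volume) (hb : ∀ t, |f t| ≤ C) :
    IntervalIntegrable f volume x y :=
  ⟨integrableOn_Ioc_of_bdd hm hb, integrableOn_Ioc_of_bdd hm hb⟩


/-- Abel-type summation bound -/
lemma abel_sum_le {β w : ℕ → ℝ} {R : ℝ} (hβ : Monotone β) (hw : ∀ i, 0 ≤ w i)
    (hβb : ∀ i, |β i| ≤ R) (n : ℕ) :
    ∑ i ∈ Finset.range n, β i * (w (i + 1) - w i) ≤ R * (w n + w 0) := by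
  have key : ∀ m : ℕ, ∑ i ∈ Finset.range m, β i * (w (i + 1) - w i)
      ≤ β m * w m - β 0 * w 0 := by
    intro m
    induction m with
    | zero => simp
    | succ m ih =>
        rw [Finset.sum_range_succ]
        have h1 : β m ≤ β (m + 1) := hβ (Nat.le_succ m)
        nlinarith [hw (m + 1), hw m]
  have h2 := key n
  have h3 : β n * w n ≤ R * w n := mul_le_mul_of_nonneg_right ((abs_le.1 (hβb n)).2) (hw n)
  have h4 : -(β 0 * w 0) ≤ R * w 0 := by
    have := (abs_le.1 (hβb 0)).1
    nlinarith [hw 0]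
  linarith

/-- Integration by parts-type inequality against a bounded monotone function. -/
lemma ibp_mono_le {K : NNReal} {Rr : ℝ} {w β : ℝ → ℝ} (hw : LipschitzWith K w)
    (hw0 : ∀ h, 0 ≤ w h) (hβm : Monotone β) (hβb : ∀ h, |β h| ≤ Rr)
    {x y : ℝ} (hxy : x ≤ y) :
    ∫ h in x..y, β h * deriv w h ≤ Rr * (w y + w x) := by
  have hRr : 0 ≤ Rr := le_trans (abs_nonneg _) (hβb x)
  have hβmeas : Measurable β := hβm.measurable
  have hint : ∀ u z : ℝ, IntervalIntegrable (fun h => β h * deriv w h) volume u z :=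
    fun u z => intervalIntegrable_of_bdd
      ((hβmeas.mul (measurable_deriv w)).aestronglyMeasurable)
      (fun t => by
        rw [abs_mul]
        exact mul_le_mul (hβb t) (abs_deriv_le_of_lip hw t) (abs_nonneg _) hRr)
  have hwint : ∀ u z : ℝ, IntervalIntegrable (deriv w) volume u z :=
    fun u z => intervalIntegrable_of_bdd (measurable_deriv w).aestronglyMeasurable
      (abs_deriv_le_of_lip hw)
  refine le_of_forall_pos_le_add fun ε hε => ?_
  obtain ⟨n, hn⟩ := exists_nat_gt (2 * Rr * K * (y - x) / ε)
  have hM : 0 ≤ 2 * Rr * K * (y - x) := by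
    have h1 : 0 ≤ Rr * (K : ℝ) * (y - x) :=
      mul_nonneg (mul_nonneg hRr K.coe_nonneg) (by linarith)
    linarith
  have hnpos : 0 < (n : ℝ) := lt_of_le_of_lt (div_nonneg hM hε.le) hn
  have hn0 : (n : ℝ) ≠ 0 := ne_of_gt hnpos
  set δ : ℝ := (y - x) / n with hδdef
  have hδ : 0 ≤ δ := div_nonneg (by linarith) hnpos.le
  set t : ℕ → ℝ := fun i => x + i * δ with htdef
  have ht0 : t 0 = x := by simp [htdef]
  have htn : t n = y := by simp only [htdef, hδdef]; field_simp; ring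
  have htm : Monotone t := fun a b hab => by
    simp only [htdef]
    have : (a : ℝ) ≤ b := Nat.cast_le.2 hab
    nlinarith
  have htstep : ∀ i : ℕ, t (i + 1) - t i = δ := fun i => by
    simp only [htdef, Nat.cast_succ]; ring
  -- split the integral
  have hsplit : ∫ h in x..y, β h * deriv w h
      = ∑ i ∈ Finset.range n, ∫ h in (t i)..(t (i + 1)), β h * deriv w h := by
    rw [← ht0, ← htn] at *
    exact (intervalIntegral.sum_integral_adjacent_intervals fun i _ => hint _ _).symm
  -- per-piece bound
  have hpiece : ∀ i : ℕ, (∫ h in (t i)..(t (i + 1)), β h * deriv w h)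
      ≤ β (t i) * (w (t (i + 1)) - w (t i)) + (β (t (i + 1)) - β (t i)) * (K * δ) := by
    intro i
    have hti : t i ≤ t (i + 1) := htm (Nat.le_succ i)
    have hmono : ∀ h ∈ Icc (t i) (t (i + 1)),
        β h * deriv w h ≤ β (t i) * deriv w h + (β (t (i + 1)) - β (t i)) * K := by
      intro h hh
      have h1 : β (t i) ≤ β h := hβm hh.1
      have h2 : β h ≤ β (t (i + 1)) := hβm hh.2
      have h3 : |deriv w h| ≤ K := abs_deriv_le_of_lip hw h
      have : (β h - β (t i)) * deriv w h ≤ (β (t (i + 1)) - β (t i)) * K := by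
        calc (β h - β (t i)) * deriv w h ≤ (β h - β (t i)) * |deriv w h| := by
              exact mul_le_mul_of_nonneg_left (le_abs_self _) (by linarith)
          _ ≤ (β (t (i + 1)) - β (t i)) * K :=
              mul_le_mul (by linarith) h3 (abs_nonneg _) (by linarith)
      nlinarith
    have hIright : IntervalIntegrable
        (fun h => β (t i) * deriv w h + (β (t (i + 1)) - β (t i)) * K) volume
        (t i) (t (i + 1)) :=
      ((hwint _ _).const_mul _).add (intervalIntegrable_const)
    have := intervalIntegral.integral_mono_on hti (hint _ _) hIright hmono
    calc (∫ h in (t i)..(t (i + 1)), β h * deriv w h)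
        ≤ ∫ h in (t i)..(t (i + 1)),
            (β (t i) * deriv w h + (β (t (i + 1)) - β (t i)) * K) := this
      _ = β (t i) * (w (t (i + 1)) - w (t i)) + (β (t (i + 1)) - β (t i)) * (K * δ) := by
          rw [intervalIntegral.integral_add ((hwint _ _).const_mul _) intervalIntegrable_const,
            intervalIntegral.integral_const_mul, lip_intervalIntegral_deriv hw hti,
            intervalIntegral.integral_const, htstep i, smul_eq_mul]
          ring
  -- sum the bounds
  have hsum1 : ∑ i ∈ Finset.range n, β (t i) * (w (t (i + 1)) - w (t i))
      ≤ Rr * (w (t n) + w (t 0)) :=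
    abel_sum_le (fun a b hab => hβm (htm hab)) (fun i => hw0 _) (fun i => hβb _) n
  have hsum2 : ∑ i ∈ Finset.range n, (β (t (i + 1)) - β (t i)) * (K * δ)
      = (β (t n) - β (t 0)) * (K * δ) := by
    rw [← Finset.sum_mul, Finset.sum_range_sub (fun i => β (t i))]
  have htail : (β (t n) - β (t 0)) * (K * δ) ≤ ε := by
    have hb1 := abs_le.1 (hβb (t n))
    have hb2 := abs_le.1 (hβb (t 0))
    have hKδ : 0 ≤ (K : ℝ) * δ := by positivity
    have h5 : (β (t n) - β (t 0)) * (K * δ) ≤ 2 * Rr * (K * δ) := by nlinarith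
    have h6 : 2 * Rr * ((K : ℝ) * δ) ≤ ε := by
      rw [hδdef]
      rw [div_lt_iff₀ hε] at hn
      calc 2 * Rr * ((K:ℝ) * ((y - x) / n)) = 2 * Rr * (K:ℝ) * (y - x) / n := by ring
        _ ≤ ε := by
            rw [div_le_iff₀ hnpos]
            nlinarith
    linarith
  rw [htn, ht0] at hsum1 hsum2 htail
  calc ∫ h in x..y, β h * deriv w h
      = ∑ i ∈ Finset.range n, ∫ h in (t i)..(t (i + 1)), β h * deriv w h := hsplit
    _ ≤ ∑ i ∈ Finset.range n, (β (t i) * (w (t (i + 1)) - w (t i))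
          + (β (t (i + 1)) - β (t i)) * (K * δ)) := Finset.sum_le_sum fun i _ => hpiece i
    _ = (∑ i ∈ Finset.range n, β (t i) * (w (t (i + 1)) - w (t i)))
          + ∑ i ∈ Finset.range n, (β (t (i + 1)) - β (t i)) * (K * δ) := by
        rw [Finset.sum_add_distrib]
    _ ≤ Rr * (w y + w x) + (β y - β x) * (K * δ) := by
        rw [hsum2]; exact add_le_add_left hsum1 _
    _ ≤ Rr * (w y + w x) + ε := by linarith


/-- the trapezoid region -/
def trap (S R s : ℝ) : Set (ℝ × ℝ) := {p | p.1 ∈ Icc 0 s ∧ |p.2| ≤ R * (S - p.1)}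

lemma trap_isClosed (S R s : ℝ) : IsClosed (trap S R s) := by
  have h1 : IsClosed {p : ℝ × ℝ | p.1 ∈ Icc 0 s} := isClosed_Icc.preimage continuous_fst
  have h2 : IsClosed {p : ℝ × ℝ | |p.2| ≤ R * (S - p.1)} :=
    isClosed_le (continuous_snd.abs) (by fun_prop)
  exact h1.inter h2

lemma trap_measurableSet (S R s : ℝ) : MeasurableSet (trap S R s) :=
  (trap_isClosed S R s).measurableSet

lemma trap_subset (S R s : ℝ) (hR : 0 < R) :
    trap S R s ⊆ Icc 0 s ×ˢ Icc (-(R * S)) (R * S) := by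
  rintro ⟨r, h⟩ ⟨hr, hh⟩
  refine ⟨hr, ?_⟩
  have h1 : R * (S - r) ≤ R * S := by nlinarith [hr.1]
  have := abs_le.1 hh
  exact ⟨by linarith, by linarith⟩

lemma trap_isCompact (S R s : ℝ) (hR : 0 < R) : IsCompact (trap S R s) :=
  (isCompact_Icc.prod isCompact_Icc).of_isClosed_subset (trap_isClosed S R s)
    (trap_subset S R s hR)

lemma trap_left {S R s : ℝ} (hR : 0 < R) (h0s : 0 ≤ s) (hsS : s ≤ S) {W : ℝ × ℝ → ℝ}
    (hW : Integrable ((trap S R s).indicator W) volume) :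
    (∫ r in (0:ℝ)..s, ∫ h in (-(R*(S-r)))..(R*(S-r)), W (r, h))
      = (∫ p, (trap S R s).indicator W p)
    ∧ IntervalIntegrable (fun r => ∫ h in (-(R*(S-r)))..(R*(S-r)), W (r, h)) volume 0 s := by
  set F := (trap S R s).indicator W with hF
  rw [Measure.volume_eq_prod] at hW
  have key1 : ∀ r, (∫ h, F (r, h))
      = (Icc (0:ℝ) s).indicator (fun r => ∫ h in (-(R*(S-r)))..(R*(S-r)), W (r, h)) r := by
    intro r
    by_cases hr : r ∈ Icc (0:ℝ) s
    · rw [indicator_of_mem hr]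
      have ha : 0 ≤ R * (S - r) := mul_nonneg hR.le (by linarith [hr.2])
      have hsec : (fun h => F (r, h))
          = (Icc (-(R*(S-r))) (R*(S-r))).indicator (fun h => W (r, h)) := by
        funext h
        by_cases hh : h ∈ Icc (-(R*(S-r))) (R*(S-r))
        · rw [indicator_of_mem hh]
          exact indicator_of_mem
            (show ((r, h) : ℝ × ℝ) ∈ trap S R s from ⟨hr, abs_le.2 ⟨hh.1, hh.2⟩⟩) W
        · rw [indicator_of_notMem hh]
          exact indicator_of_notMem
            (fun (hmem : ((r, h) : ℝ × ℝ) ∈ trap S R s) =>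
              hh ⟨(abs_le.1 hmem.2).1, (abs_le.1 hmem.2).2⟩) W
      rw [hsec, integral_indicator measurableSet_Icc, integral_Icc_eq_integral_Ioc,
        ← intervalIntegral.integral_of_le (by linarith)]
    · rw [indicator_of_notMem hr]
      have : ∀ h, F (r, h) = 0 := fun h => indicator_of_notMem
        (fun (hmem : ((r, h) : ℝ × ℝ) ∈ trap S R s) => hr hmem.1) W
      simp [this]
  have e1 : (∫ p, F p ∂(volume : Measure (ℝ × ℝ))) = ∫ r, ∫ h, F (r, h) := by
    rw [Measure.volume_eq_prod]
    exact integral_prod F hW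
  constructor
  · rw [intervalIntegral.integral_of_le h0s, ← integral_Icc_eq_integral_Ioc,
      ← integral_indicator measurableSet_Icc, e1]
    exact (integral_congr_ae (ae_of_all _ fun r => (key1 r))).symm
  · rw [intervalIntegrable_iff_integrableOn_Ioc_of_le h0s]
    have hFi : Integrable (fun r => ∫ h, F (r, h)) volume := hW.integral_prod_left
    refine (hFi.integrableOn (s := Ioc 0 s)).congr_fun ?_ measurableSet_Ioc
    exact fun r hr => (key1 r).trans (indicator_of_mem (Ioc_subset_Icc_self hr) _)

lemma trap_right {S R s : ℝ} (hR : 0 < R) (h0s : 0 ≤ s) (hsS : s ≤ S) {W : ℝ × ℝ → ℝ}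
    (hW : Integrable ((trap S R s).indicator W) volume) :
    (∫ h in (-(R*S))..(R*S), ∫ r in (0:ℝ)..(min s (S - |h| / R)), W (r, h))
      = ∫ p, (trap S R s).indicator W p := by
  set F := (trap S R s).indicator W with hF
  rw [Measure.volume_eq_prod] at hW
  have key2 : ∀ h, (∫ r, F (r, h))
      = (Icc (-(R*S)) (R*S)).indicator
          (fun h => ∫ r in (0:ℝ)..(min s (S - |h| / R)), W (r, h)) h := by
    intro h
    by_cases hh : h ∈ Icc (-(R*S)) (R*S)
    · rw [indicator_of_mem hh]
      have habs : |h| ≤ R * S := abs_le.2 ⟨hh.1, hh.2⟩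
      have hτ0 : 0 ≤ min s (S - |h| / R) := by
        refine le_min h0s ?_
        rw [sub_nonneg, div_le_iff₀ hR]
        linarith [habs]
      have hsec : (fun r => F (r, h))
          = (Icc 0 (min s (S - |h| / R))).indicator (fun r => W (r, h)) := by
        funext r
        have hmemiff : r ∈ Icc 0 (min s (S - |h| / R)) ↔ (r, h) ∈ trap S R s := by
          constructor
          · rintro ⟨h0r, hrτ⟩
            have h1 : r ≤ s := le_trans hrτ (min_le_left _ _)
            have h2 : r ≤ S - |h| / R := le_trans hrτ (min_le_right _ _)
            refine ⟨⟨h0r, h1⟩, ?_⟩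
            have : |h| / R ≤ S - r := by linarith
            rw [div_le_iff₀ hR] at this
            linarith
          · rintro ⟨⟨h0r, hrs⟩, hba⟩
            refine ⟨h0r, le_min hrs ?_⟩
            have : |h| / R ≤ S - r := by
              rw [div_le_iff₀ hR]; linarith
            linarith
        by_cases hr : r ∈ Icc 0 (min s (S - |h| / R))
        · rw [indicator_of_mem hr]
          exact indicator_of_mem (hmemiff.1 hr) W
        · rw [indicator_of_notMem hr]
          exact indicator_of_notMem
            (fun (hc : ((r, h) : ℝ × ℝ) ∈ trap S R s) => hr (hmemiff.2 hc)) W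
      rw [hsec, integral_indicator measurableSet_Icc, integral_Icc_eq_integral_Ioc,
        ← intervalIntegral.integral_of_le hτ0]
    · rw [indicator_of_notMem hh]
      have : ∀ r, F (r, h) = 0 := by
        intro r
        refine indicator_of_notMem
          (fun (hmem : ((r, h) : ℝ × ℝ) ∈ trap S R s) => hh ?_) W
        rcases hmem with ⟨hr, hba⟩
        have h1 : R * (S - r) ≤ R * S := by nlinarith [hr.1]
        have h2 : |h| ≤ R * S := le_trans hba h1
        exact ⟨(abs_le.1 h2).1, (abs_le.1 h2).2⟩
      simp [this]
  have e2 : (∫ p, F p ∂(volume : Measure (ℝ × ℝ))) = ∫ h, ∫ r, F (r, h) := by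
    rw [Measure.volume_eq_prod]
    exact integral_prod_symm F hW
  have hRS : 0 ≤ R * S := mul_nonneg hR.le (le_trans h0s hsS)
  rw [intervalIntegral.integral_of_le (by linarith : -(R*S) ≤ R*S),
    ← integral_Icc_eq_integral_Ioc, ← integral_indicator measurableSet_Icc, e2]
  exact (integral_congr_ae (ae_of_all _ fun h => (key2 h))).symm


lemma main_est {S R : ℝ} (hS : 0 < S) (hR : 0 < R) {K : NNReal} (v b g : ℝ → ℝ → ℝ)
    (hv0 : ∀ r h, 0 ≤ v r h)
    (hvlip : LipschitzWith K (Function.uncurry v))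
    (hb_meas : Measurable (Function.uncurry b))
    (hb_bdd : ∀ r ∈ Icc (0:ℝ) S, ∀ h : ℝ, |b r h| ≤ R)
    (hb_mono : ∀ r ∈ Icc (0:ℝ) S, Monotone (b r))
    (hg_locint : LocallyIntegrable (Function.uncurry g) volume)
    (hpde : ∀ᵐ p : ℝ × ℝ ∂volume, p ∈ Ioo (0:ℝ) S ×ˢ (univ : Set ℝ) →
      2 * deriv (fun s' => v s' p.2) p.1 = b p.1 p.2 * deriv (fun h' => v p.1 h') p.2
        + g p.1 p.2)
    (s : ℝ) (hs : s ∈ Icc (0:ℝ) S) :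
    (∫ h in (-(R * (S - s)))..(R * (S - s)), v s h)
      ≤ (∫ h in (-(R * S))..(R * S), v 0 h)
        + (1 / 2) * ∫ r in (0:ℝ)..s,
            (∫ h in (-(R * (S - r)))..(R * (S - r)), |g r h|) := by
  obtain ⟨h0s, hsS⟩ := hs
  have hK := K.coe_nonneg
  have vc : Continuous (Function.uncurry v) := hvlip.continuous
  have sec1 : ∀ h : ℝ, LipschitzWith K (fun r => v r h) := by
    intro h
    have := hvlip.comp (LipschitzWith.prodMk_right h)
    rwa [mul_one] at this
  have sec2 : ∀ r : ℝ, LipschitzWith K (v r) := by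
    intro r
    have := hvlip.comp (LipschitzWith.prodMk_left r)
    rwa [mul_one] at this
  set φ : ℝ × ℝ → ℝ := fun p => deriv (fun r => v r p.2) p.1 with hφ
  set ψ : ℝ × ℝ → ℝ := fun p => deriv (v p.1) p.2 with hψ
  have measψ : Measurable ψ := measurable_deriv_with_param vc
  have measφ : Measurable φ := by
    have hWc : Continuous (Function.uncurry fun h r => v r h) :=
      vc.comp continuous_swap
    have h1 : Measurable (fun q : ℝ × ℝ => deriv (fun r => v r q.1) q.2) :=
      measurable_deriv_with_param (f := fun h r => v r h) hWc
    exact h1.comp measurable_swap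
  have φb : ∀ p, |φ p| ≤ K := fun p => abs_deriv_le_of_lip (sec1 p.2) p.1
  have ψb : ∀ p, |ψ p| ≤ K := fun p => abs_deriv_le_of_lip (sec2 p.1) p.2
  have hTmeas := trap_measurableSet S R s
  have hTcpt := trap_isCompact S R s hR
  -- integrable indicators
  have hind : ∀ (W : ℝ × ℝ → ℝ) (C : ℝ), Measurable W → (∀ p, |W p| ≤ C) →
      Integrable ((trap S R s).indicator W) volume := by
    intro W C mW bW
    rw [integrable_indicator_iff hTmeas]
    refine Integrable.mono' (g := fun _ => C)
      (integrableOn_const hTcpt.measure_lt_top.ne)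
      mW.aestronglyMeasurable.restrict
      (ae_of_all _ fun p => by simpa [Real.norm_eq_abs] using bW p)
  have intφ : Integrable ((trap S R s).indicator φ) volume := hind φ K measφ φb
  have intgabs : Integrable ((trap S R s).indicator
      (fun p : ℝ × ℝ => |g p.1 p.2|)) volume := by
    rw [integrable_indicator_iff hTmeas]
    exact (hg_locint.integrableOn_isCompact hTcpt).abs
  obtain ⟨eqφL, intφL⟩ := trap_left hR h0s hsS intφ
  have eqφR := trap_right hR h0s hsS intφ
  obtain ⟨eqgL, intgL⟩ := trap_left hR h0s hsS intgabs
  -- the swapped integral, identified by FTC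
  have has0 : 0 ≤ R * (S - s) := mul_nonneg hR.le (by linarith)
  have hasRS : R * (S - s) ≤ R * S := by nlinarith
  have hRS0 : 0 ≤ R * S := by linarith
  set τ : ℝ → ℝ := fun h => min s (S - |h| / R) with hτ
  have hswap : (∫ r in (0:ℝ)..s, ∫ h in (-(R*(S-r)))..(R*(S-r)), φ (r, h))
      = ∫ h in (-(R*S))..(R*S), (v (τ h) h - v 0 h) := by
    rw [eqφL, ← eqφR]
    refine intervalIntegral.integral_congr fun h hh => ?_
    rw [uIcc_of_le (by linarith)] at hh
    have hτ0 : 0 ≤ τ h := by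
      refine le_min h0s ?_
      rw [sub_nonneg, div_le_iff₀ hR]
      rcases abs_le.2 ⟨hh.1, hh.2⟩ with habs
      linarith [abs_le.2 (⟨hh.1, hh.2⟩ : -(R*S) ≤ h ∧ h ≤ R*S)]
    exact lip_intervalIntegral_deriv (sec1 h) hτ0
  -- continuity of various integrands
  have cτ : Continuous τ := by
    apply continuous_const.min
    exact continuous_const.sub (continuous_abs.div_const R)
  have cvτ : Continuous fun h => v (τ h) h := vc.comp (cτ.prodMk continuous_id)
  have cv0 : Continuous fun h => v 0 h := vc.comp (continuous_const.prodMk continuous_id)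
  have cvr : Continuous fun h => v (S - h / R) h :=
    vc.comp ((continuous_const.sub (continuous_id.div_const R)).prodMk continuous_id)
  have cvl : Continuous fun h => v (S + h / R) h :=
    vc.comp ((continuous_const.add (continuous_id.div_const R)).prodMk continuous_id)
  -- split the h-integral into three pieces
  set Es : ℝ := ∫ h in (-(R * (S - s)))..(R * (S - s)), v s h with hEs
  set E0 : ℝ := ∫ h in (-(R * S))..(R * S), v 0 h with hE0
  set Br : ℝ := ∫ h in (R*(S-s))..(R*S), v (S - h / R) h with hBr
  set Bl : ℝ := ∫ h in (-(R*S))..(-(R*(S-s))), v (S + h / R) h with hBl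
  have hsplit : (∫ h in (-(R*S))..(R*S), (v (τ h) h - v 0 h)) = Es + Bl + Br - E0 := by
    have hsub : (∫ h in (-(R*S))..(R*S), (v (τ h) h - v 0 h))
        = (∫ h in (-(R*S))..(R*S), v (τ h) h) - E0 :=
      intervalIntegral.integral_sub (cvτ.intervalIntegrable _ _) (cv0.intervalIntegrable _ _)
    have h1 : (∫ h in (-(R*S))..(-(R*(S-s))), v (τ h) h)
        + (∫ h in (-(R*(S-s)))..(R*S), v (τ h) h)
        = ∫ h in (-(R*S))..(R*S), v (τ h) h :=
      intervalIntegral.integral_add_adjacent_intervals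
        (cvτ.intervalIntegrable _ _) (cvτ.intervalIntegrable _ _)
    have h2 : (∫ h in (-(R*(S-s)))..(R*(S-s)), v (τ h) h)
        + (∫ h in (R*(S-s))..(R*S), v (τ h) h)
        = ∫ h in (-(R*(S-s)))..(R*S), v (τ h) h :=
      intervalIntegral.integral_add_adjacent_intervals
        (cvτ.intervalIntegrable _ _) (cvτ.intervalIntegrable _ _)
    have hmid : (∫ h in (-(R*(S-s)))..(R*(S-s)), v (τ h) h) = Es := by
      refine intervalIntegral.integral_congr fun h hh => ?_
      rw [uIcc_of_le (by linarith)] at hh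
      have habs : |h| ≤ R * (S - s) := abs_le.2 ⟨hh.1, hh.2⟩
      have : τ h = s := by
        refine min_eq_left ?_
        rw [← sub_nonneg]
        have : |h| / R ≤ S - s := by rw [div_le_iff₀ hR]; linarith
        linarith
      rw [this]
    have hright : (∫ h in (R*(S-s))..(R*S), v (τ h) h) = Br := by
      refine intervalIntegral.integral_congr fun h hh => ?_
      rw [uIcc_of_le hasRS] at hh
      have h0h : 0 ≤ h := le_trans has0 hh.1
      have habs : |h| = h := abs_of_nonneg h0h
      have : τ h = S - h / R := by
        show min s (S - |h| / R) = S - h / R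
        rw [habs]
        refine min_eq_right ?_
        have : S - s ≤ h / R := by rw [le_div_iff₀ hR]; linarith [hh.1]
        linarith
      rw [this]
    have hleft : (∫ h in (-(R*S))..(-(R*(S-s))), v (τ h) h) = Bl := by
      refine intervalIntegral.integral_congr fun h hh => ?_
      rw [uIcc_of_le (by linarith)] at hh
      have hh0 : h ≤ 0 := le_trans hh.2 (by linarith)
      have habs : |h| = -h := abs_of_nonpos hh0
      have : τ h = S + h / R := by
        show min s (S - |h| / R) = S + h / R
        rw [habs]
        have he : S - -h / R = S + h / R := by ring
        rw [he]
        refine min_eq_right ?_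
        have : h / R ≤ s - S := by rw [div_le_iff₀ hR]; nlinarith [hh.2]
        linarith
      rw [this]
    rw [hsub, ← h1, ← h2, hmid, hright, hleft]
    ring
  -- substitution identities
  have hXr : Br = R * ∫ r in (0:ℝ)..s, v r (R * (S - r)) := by
    have hc : (-R) ≠ 0 := by intro hc; rw [neg_eq_zero] at hc; exact hR.ne' hc
    have e1 : (∫ r in (0:ℝ)..s, (fun h => v (S - h / R) h) (-R * r + R * S))
        = (-R)⁻¹ • ∫ x in (-R * 0 + R * S)..(-R * s + R * S), (fun h => v (S - h / R) h) x :=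
      intervalIntegral.integral_comp_mul_add (fun h => v (S - h / R) h) hc (R * S)
    have e2 : (∫ r in (0:ℝ)..s, (fun h => v (S - h / R) h) (-R * r + R * S))
        = ∫ r in (0:ℝ)..s, v r (R * (S - r)) := by
      refine intervalIntegral.integral_congr fun r _ => ?_
      have harg : S - (-R * r + R * S) / R = r := by field_simp; ring
      simp only []
      rw [harg]
      ring_nf
    have e3 : (-R * 0 + R * S : ℝ) = R * S := by ring
    have e4 : (-R * s + R * S : ℝ) = R * (S - s) := by ring
    rw [e3, e4] at e1
    rw [← e2, e1, intervalIntegral.integral_symm, hBr, smul_eq_mul]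
    field_simp
  have hXl : Bl = R * ∫ r in (0:ℝ)..s, v r (-(R * (S - r))) := by
    have hc : R ≠ 0 := hR.ne'
    have e1 : (∫ r in (0:ℝ)..s, (fun h => v (S + h / R) h) (R * r + -(R * S)))
        = R⁻¹ • ∫ x in (R * 0 + -(R * S))..(R * s + -(R * S)), (fun h => v (S + h / R) h) x :=
      intervalIntegral.integral_comp_mul_add (fun h => v (S + h / R) h) hc (-(R * S))
    have e2 : (∫ r in (0:ℝ)..s, (fun h => v (S + h / R) h) (R * r + -(R * S)))
        = ∫ r in (0:ℝ)..s, v r (-(R * (S - r))) := by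
      refine intervalIntegral.integral_congr fun r _ => ?_
      have harg : S + (R * r + -(R * S)) / R = r := by field_simp; ring
      simp only []
      rw [harg]
      ring_nf
    have e3 : (R * 0 + -(R * S) : ℝ) = -(R * S) := by ring
    have e4 : (R * s + -(R * S) : ℝ) = -(R * (S - s)) := by ring
    rw [e3, e4] at e1
    rw [← e2, e1, hBl, smul_eq_mul]
    field_simp
  -- a.e. slice inequality
  rw [Measure.volume_eq_prod] at hpde
  have hae1 := Measure.ae_ae_of_ae_prod hpde
  set box : Set (ℝ × ℝ) := Icc (0:ℝ) s ×ˢ Icc (-(R*S)) (R*S) with hbox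
  have boxmeas : MeasurableSet box := measurableSet_Icc.prod measurableSet_Icc
  have boxcpt : IsCompact box := isCompact_Icc.prod isCompact_Icc
  have intbox : Integrable (box.indicator (Function.uncurry g)) volume := by
    rw [integrable_indicator_iff boxmeas]
    exact hg_locint.integrableOn_isCompact boxcpt
  rw [Measure.volume_eq_prod] at intbox
  have hae2 := intbox.prod_right_ae
  have slice : ∀ᵐ r : ℝ ∂volume, r ∈ Ioo 0 s →
      2 * (∫ h in (-(R*(S-r)))..(R*(S-r)), φ (r, h))
        ≤ R * v r (R*(S-r)) + R * v r (-(R*(S-r)))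
          + ∫ h in (-(R*(S-r)))..(R*(S-r)), |g r h| := by
    filter_upwards [hae1, hae2] with r h1 h2 hr
    have hrS : r ∈ Ioo (0:ℝ) S := ⟨hr.1, lt_of_lt_of_le hr.2 hsS⟩
    have hrIcc : r ∈ Icc (0:ℝ) S := ⟨hr.1.le, hrS.2.le⟩
    have har : 0 ≤ R * (S - r) := mul_nonneg hR.le (by linarith [hrS.2])
    have harRS : R * (S - r) ≤ R * S := by nlinarith [hr.1]
    have hbnd : -(R*(S-r)) ≤ R*(S-r) := by linarith
    have eqae : ∀ᵐ h : ℝ ∂volume, 2 * φ (r, h) = b r h * ψ (r, h) + g r h := by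
      filter_upwards [h1] with h hh
      exact hh ⟨hrS, mem_univ _⟩
    have hsec : (fun h => box.indicator (Function.uncurry g) (r, h))
        = (Icc (-(R*S)) (R*S)).indicator (g r) := by
      funext h
      by_cases hm : h ∈ Icc (-(R*S)) (R*S)
      · rw [indicator_of_mem hm]
        exact indicator_of_mem
          (show ((r, h) : ℝ × ℝ) ∈ box from ⟨⟨hr.1.le, hr.2.le⟩, hm⟩) _
      · rw [indicator_of_notMem hm]
        exact indicator_of_notMem (fun (hc : ((r, h) : ℝ × ℝ) ∈ box) => hm hc.2) _
    rw [hsec] at h2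
    have gInt : IntervalIntegrable (g r) volume (-(R*(S-r))) (R*(S-r)) := by
      rw [intervalIntegrable_iff]
      refine ((integrable_indicator_iff measurableSet_Icc).1 h2).mono_set ?_
      rw [uIoc_of_le hbnd]
      exact fun x hx => ⟨by linarith [hx.1], by linarith [hx.2]⟩
    have gIntAbs : IntervalIntegrable (fun h => |g r h|) volume (-(R*(S-r))) (R*(S-r)) :=
      gInt.abs
    have mφr : Measurable fun h => φ (r, h) := measφ.comp measurable_prodMk_left
    have mψr : Measurable fun h => ψ (r, h) := measψ.comp measurable_prodMk_left
    have mbr : Measurable (b r) := hb_meas.comp measurable_prodMk_left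
    have φInt : IntervalIntegrable (fun h => φ (r, h)) volume (-(R*(S-r))) (R*(S-r)) :=
      intervalIntegrable_of_bdd mφr.aestronglyMeasurable (fun t => φb (r, t))
    have bψInt : IntervalIntegrable (fun h => b r h * ψ (r, h)) volume
        (-(R*(S-r))) (R*(S-r)) :=
      intervalIntegrable_of_bdd (C := R * K) (mbr.mul mψr).aestronglyMeasurable (fun t => by
        rw [abs_mul]
        exact mul_le_mul (hb_bdd r hrIcc t) (ψb (r, t)) (abs_nonneg _) hR.le)
    have e1 : (∫ h in (-(R*(S-r)))..(R*(S-r)), 2 * φ (r, h))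
        = ∫ h in (-(R*(S-r)))..(R*(S-r)), (b r h * ψ (r, h) + g r h) := by
      refine intervalIntegral.integral_congr_ae ?_
      filter_upwards [eqae] with h hh _
      exact hh
    have e2 : (∫ h in (-(R*(S-r)))..(R*(S-r)), (b r h * ψ (r, h) + g r h))
        = (∫ h in (-(R*(S-r)))..(R*(S-r)), b r h * ψ (r, h))
          + ∫ h in (-(R*(S-r)))..(R*(S-r)), g r h :=
      intervalIntegral.integral_add bψInt gInt
    have e3 : (∫ h in (-(R*(S-r)))..(R*(S-r)), b r h * ψ (r, h))
        ≤ R * (v r (R*(S-r)) + v r (-(R*(S-r)))) :=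
      ibp_mono_le (sec2 r) (hv0 r) (hb_mono r hrIcc) (hb_bdd r hrIcc) hbnd
    have e4 : (∫ h in (-(R*(S-r)))..(R*(S-r)), g r h)
        ≤ ∫ h in (-(R*(S-r)))..(R*(S-r)), |g r h| :=
      le_trans (le_abs_self _) (intervalIntegral.abs_integral_le_integral_abs hbnd)
    calc 2 * (∫ h in (-(R*(S-r)))..(R*(S-r)), φ (r, h))
        = ∫ h in (-(R*(S-r)))..(R*(S-r)), 2 * φ (r, h) :=
          (intervalIntegral.integral_const_mul 2 _).symm
      _ = _ := e1
      _ = _ := e2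
      _ ≤ R * (v r (R*(S-r)) + v r (-(R*(S-r))))
            + ∫ h in (-(R*(S-r)))..(R*(S-r)), |g r h| := add_le_add e3 e4
      _ = R * v r (R*(S-r)) + R * v r (-(R*(S-r)))
            + ∫ h in (-(R*(S-r)))..(R*(S-r)), |g r h| := by ring
  -- upgrade to restricted a.e.
  have hIoo : ∀ᵐ r ∂(volume.restrict (Icc (0:ℝ) s)), r ∈ Ioo (0:ℝ) s := by
    rw [ae_restrict_iff' measurableSet_Icc, ae_iff]
    have h2pts : (volume : Measure ℝ) ({0, s} : Set ℝ) = 0 :=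
      (Set.countable_singleton s |>.insert 0).measure_zero _
    refine measure_mono_null ?_ h2pts
    intro r hrr
    simp only [mem_setOf_eq, Classical.not_imp] at hrr
    obtain ⟨hIcc, hnIoo⟩ := hrr
    simp only [mem_insert_iff, mem_singleton_iff]
    rcases eq_or_lt_of_le hIcc.1 with h0 | h0
    · exact Or.inl h0.symm
    · right
      by_contra hne
      exact hnIoo ⟨h0, lt_of_le_of_ne hIcc.2 hne⟩
  have hle : (fun r => 2 * ∫ h in (-(R*(S-r)))..(R*(S-r)), φ (r, h))
      ≤ᵐ[volume.restrict (Icc (0:ℝ) s)]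
      (fun r => R * v r (R*(S-r)) + R * v r (-(R*(S-r)))
        + ∫ h in (-(R*(S-r)))..(R*(S-r)), |g r h|) := by
    filter_upwards [ae_restrict_of_ae slice, hIoo] with r hsl hio
    exact hsl hio
  -- integrability on [0,s]
  have cb1 : Continuous fun r => R * v r (R*(S-r)) :=
    continuous_const.mul (vc.comp (continuous_id.prodMk
      (continuous_const.mul (continuous_const.sub continuous_id))))
  have cb2 : Continuous fun r => R * v r (-(R*(S-r))) :=
    continuous_const.mul (vc.comp (continuous_id.prodMk
      ((continuous_const.mul (continuous_const.sub continuous_id)).neg)))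
  have RHSint : IntervalIntegrable
      (fun r => R * v r (R*(S-r)) + R * v r (-(R*(S-r)))
        + ∫ h in (-(R*(S-r)))..(R*(S-r)), |g r h|) volume 0 s :=
    ((cb1.intervalIntegrable 0 s).add (cb2.intervalIntegrable 0 s)).add intgL
  have hmono := intervalIntegral.integral_mono_ae_restrict h0s (intφL.const_mul 2) RHSint hle
  -- evaluate both sides
  have hLHS : (∫ r in (0:ℝ)..s, 2 * ∫ h in (-(R*(S-r)))..(R*(S-r)), φ (r, h))
      = 2 * ∫ r in (0:ℝ)..s, ∫ h in (-(R*(S-r)))..(R*(S-r)), φ (r, h) :=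
    intervalIntegral.integral_const_mul 2 _
  have hRHS : (∫ r in (0:ℝ)..s, (R * v r (R*(S-r)) + R * v r (-(R*(S-r)))
        + ∫ h in (-(R*(S-r)))..(R*(S-r)), |g r h|))
      = (R * ∫ r in (0:ℝ)..s, v r (R*(S-r))) + (R * ∫ r in (0:ℝ)..s, v r (-(R*(S-r))))
        + ∫ r in (0:ℝ)..s, ∫ h in (-(R*(S-r)))..(R*(S-r)), |g r h| := by
    rw [intervalIntegral.integral_add ((cb1.intervalIntegrable 0 s).add
      (cb2.intervalIntegrable 0 s)) intgL,
      intervalIntegral.integral_add (cb1.intervalIntegrable 0 s) (cb2.intervalIntegrable 0 s),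
      intervalIntegral.integral_const_mul, intervalIntegral.integral_const_mul]
  have hJ : (∫ r in (0:ℝ)..s, ∫ h in (-(R*(S-r)))..(R*(S-r)), φ (r, h))
      = Es + Bl + Br - E0 := hswap.trans hsplit
  have hBr0 : 0 ≤ Br := intervalIntegral.integral_nonneg hasRS (fun u _ => hv0 _ _)
  have hBl0 : 0 ≤ Bl := intervalIntegral.integral_nonneg (by linarith) (fun u _ => hv0 _ _)
  rw [hLHS, hRHS, hJ] at hmono
  linarith [hmono, hXr, hXl, hBr0, hBl0]



/-- finite speed of propagation for the approximate transport equation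
`2 ∂_s v = b ∂_h v + g` with bounded drift `b` (`|b| ≤ R`) that is nondecreasing in `h`,
for a nonnegative Lipschitz function `v` on `[0,S] × ℝ`:
`∫_{-R(S-s)}^{R(S-s)} v(s,h) dh ≤ ∫_{-RS}^{RS} v(0,h) dh
  + (1/2) ∫_0^s ∫_{-R(S-r)}^{R(S-r)} |g(r,h)| dh dr`. -/
theorem transport_estimate (S R : ℝ) (hS : 0 < S) (hR : 0 < R)
    (v b g : ℝ → ℝ → ℝ)
    (hv_nonneg : ∀ s ∈ Set.Icc (0:ℝ) S, ∀ h : ℝ, 0 ≤ v s h)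
    (hv_lip : ∃ K : NNReal,
      LipschitzOnWith K (Function.uncurry v) (Set.Icc (0:ℝ) S ×ˢ (Set.univ : Set ℝ)))
    (hb_meas : Measurable (Function.uncurry b))
    (hb_bdd : ∀ s ∈ Set.Icc (0:ℝ) S, ∀ h : ℝ, |b s h| ≤ R)
    (hb_mono : ∀ s ∈ Set.Icc (0:ℝ) S, Monotone (b s))
    (hg_locint : LocallyIntegrable (Function.uncurry g) volume)
    (hpde : ∀ᵐ p : ℝ × ℝ ∂volume, p ∈ Set.Ioo (0:ℝ) S ×ˢ (Set.univ : Set ℝ) →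
      DifferentiableAt ℝ (Function.uncurry v) p ∧
      2 * deriv (fun s' => v s' p.2) p.1 = b p.1 p.2 * deriv (fun h' => v p.1 h') p.2
        + g p.1 p.2) :
    ∀ s ∈ Set.Icc (0:ℝ) S,
      (∫ h in (-(R * (S - s)))..(R * (S - s)), v s h)
        ≤ (∫ h in (-(R * S))..(R * S), v 0 h)
          + (1 / 2) * ∫ r in (0:ℝ)..s,
              (∫ h in (-(R * (S - r)))..(R * (S - r)), |g r h|) := by
  obtain ⟨K, hK⟩ := hv_lip
  set c : ℝ → ℝ := fun r => max 0 (min r S) with hc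
  have hcmem : ∀ r, c r ∈ Icc (0:ℝ) S := fun r =>
    ⟨le_max_left _ _, max_le hS.le (min_le_right _ _)⟩
  have hceq : ∀ r ∈ Icc (0:ℝ) S, c r = r := by
    intro r hr
    rw [hc]
    simp only []
    rw [min_eq_left hr.2, max_eq_right hr.1]
  have hclip : LipschitzWith 1 c := by
    refine LipschitzWith.of_dist_le_mul fun a b' => ?_
    rw [Real.dist_eq, Real.dist_eq, NNReal.coe_one, one_mul]
    calc |c a - c b'| = |max (min a S) 0 - max (min b' S) 0| := by
          rw [hc]
          simp only [max_comm]
      _ ≤ |min a S - min b' S| := abs_max_sub_max_le_abs _ _ _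
      _ ≤ |a - b'| := by
          rcases le_total a S with h1 | h1 <;> rcases le_total b' S with h2 | h2
          · rw [min_eq_left h1, min_eq_left h2]
          · rw [min_eq_left h1, min_eq_right h2]
            have e1 : |a - S| = -(a - S) := abs_of_nonpos (by linarith)
            have e2 : |a - b'| = -(a - b') := abs_of_nonpos (by linarith)
            linarith
          · rw [min_eq_right h1, min_eq_left h2]
            have e1 : |S - b'| = S - b' := abs_of_nonneg (by linarith)
            have e2 : |a - b'| = a - b' := abs_of_nonneg (by linarith)
            linarith
          · rw [min_eq_right h1, min_eq_right h2]
            simp only [sub_self, abs_zero]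
            exact abs_nonneg _
  set V : ℝ → ℝ → ℝ := fun r h => v (c r) h with hV
  have hV0 : ∀ r h, 0 ≤ V r h := fun r h => hv_nonneg _ (hcmem r) h
  have hVlip : LipschitzWith K (Function.uncurry V) := by
    intro p q
    have h1 : edist (Function.uncurry V p) (Function.uncurry V q)
        ≤ K * edist (c p.1, p.2) (c q.1, q.2) :=
      hK ⟨hcmem _, mem_univ _⟩ ⟨hcmem _, mem_univ _⟩
    refine le_trans h1 (mul_le_mul_right ?_ _)
    rw [Prod.edist_eq, Prod.edist_eq]
    refine max_le_max ?_ le_rfl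
    have := hclip p.1 q.1
    rwa [ENNReal.coe_one, one_mul] at this
  have hVpde : ∀ᵐ p : ℝ × ℝ ∂volume, p ∈ Ioo (0:ℝ) S ×ˢ (univ : Set ℝ) →
      2 * deriv (fun s' => V s' p.2) p.1 = b p.1 p.2 * deriv (fun h' => V p.1 h') p.2
        + g p.1 p.2 := by
    filter_upwards [hpde] with p hp hmem
    obtain ⟨-, h2⟩ := hp hmem
    have hd1 : deriv (fun r => V r p.2) p.1 = deriv (fun r => v r p.2) p.1 := by
      apply Filter.EventuallyEq.deriv_eq
      filter_upwards [isOpen_Ioo.mem_nhds hmem.1] with r hr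
      show v (c r) p.2 = v r p.2
      rw [hceq r (Ioo_subset_Icc_self hr)]
    have hd2 : (fun h => V p.1 h) = (fun h => v p.1 h) := by
      funext h
      show v (c p.1) h = v p.1 h
      rw [hceq p.1 (Ioo_subset_Icc_self hmem.1)]
    rw [hd1, hd2]
    exact h2
  intro s hs
  have hmain := main_est hS hR V b g hV0 hVlip hb_meas hb_bdd hb_mono hg_locint hVpde s hs
  have e1 : (∫ h in (-(R * (S - s)))..(R * (S - s)), V s h)
      = ∫ h in (-(R * (S - s)))..(R * (S - s)), v s h :=
    intervalIntegral.integral_congr fun h _ => by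
      show v (c s) h = v s h
      rw [hceq s hs]
  have e0 : (∫ h in (-(R * S))..(R * S), V 0 h) = ∫ h in (-(R * S))..(R * S), v 0 h :=
    intervalIntegral.integral_congr fun h _ => by
      show v (c 0) h = v 0 h
      rw [hceq 0 ⟨le_refl _, hS.le⟩]
  rw [e1, e0] at hmain
  exact hmain
end
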